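/- arXiv:1711.01057 — 5 statements merged into one kernel-verified Lean document; each statement's English description precedes it below -/
import Mathlib

section
/- Let (W,S) be a right-angled Coxeter system, let w ∈ W and let r ∈ S. If ℓ(wr) > ℓ(w), then F#(wr) ≥ F#(w). -/
/-- A Coxeter matrix is *right-angled* if all of its off-diagonal entries are equal to `2`
or to `0` (where `0` encodes `∞`, i.e. no relation). -/
def CoxeterMatrix.IsRightAngled {B : Type*} (M : CoxeterMatrix B) : Prop :=
  ∀ i j : B, i ≠ j → M i j = 2 ∨ M i j = 0

/-- An element `w` of a Coxeter group is *firm* if there is a unique simple generator `r`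
with `ℓ(w r) < ℓ(w)`.  (This forces `ℓ(w) ≥ 1`.) -/
def CoxeterSystem.IsFirm {B W : Type*} [Group W] {M : CoxeterMatrix B}
    (cs : CoxeterSystem M W) (w : W) : Prop :=
  ∃! r : B, cs.length (w * cs.simple r) < cs.length w

/-- The *firmness* `F#(w)` of an element `w` of a Coxeter group: the largest `k` such that
`w` admits a reduced representation whose prefix of length `k` represents a firm element
(of length `k`, automatically).  By convention `F#(1) = 0` (the case `k = 0`). -/
noncomputable def CoxeterSystem.firmness {B W : Type*} [Group W] {M : CoxeterMatrix B}
    (cs : CoxeterSystem M W) (w : W) : ℕ :=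
  sSup {k | ∃ ω : List B, cs.IsReduced ω ∧ cs.wordProd ω = w ∧ k ≤ ω.length ∧
    (k = 0 ∨ cs.IsFirm (cs.wordProd (ω.take k)))}

/-- Lemma 2.11(iii): if `ℓ(w r) > ℓ(w)` then `F#(w r) ≥ F#(w)`. -/
theorem firmness_le_firmness_mul_simple {B W : Type*} [Group W] {M : CoxeterMatrix B}
    (cs : CoxeterSystem M W) (hra : M.IsRightAngled)
    (w : W) (r : B) (h : cs.length w < cs.length (w * cs.simple r)) :
    cs.firmness w ≤ cs.firmness (w * cs.simple r) := by
  have hlen : cs.length (w * cs.simple r) = cs.length w + 1 := by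
    rcases cs.length_mul_simple w r with h1 | h1
    · exact h1
    · omega
  apply csSup_le_csSup
  · -- BddAbove: every element of the target set is ≤ ℓ(wr)
    refine ⟨cs.length (w * cs.simple r), ?_⟩
    rintro k ⟨ω, hred, hprod, hk, -⟩
    have : ω.length = cs.length (w * cs.simple r) := by
      rw [← hprod]; exact hred.symm
    omega
  · -- Nonempty: 0 is in the set for w
    obtain ⟨ω, hred, hprod⟩ := cs.exists_reduced_word' w
    exact ⟨0, ω, hred, hprod.symm, Nat.zero_le _, Or.inl rfl⟩
  · -- subset
    rintro k ⟨ω, hred, hprod, hk, hfirm⟩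
    refine ⟨ω ++ [r], ?_, ?_, ?_, ?_⟩
    · unfold CoxeterSystem.IsReduced at *
      rw [cs.wordProd_append, cs.wordProd_singleton, hprod, hlen,
        List.length_append, List.length_singleton, ← hprod, ← hred]
    · rw [cs.wordProd_append, cs.wordProd_singleton, hprod]
    · simp only [List.length_append, List.length_singleton]; omega
    · rcases hfirm with h0 | hfirm
      · exact Or.inl h0
      · refine Or.inr ?_
        rwa [List.take_append_of_le_length hk]
end

section
/- Let (W,S) be a right-angled Coxeter system with S finite and let b ∈ ℕ. Then there exists a positive integer f(b), depending only on b and on (W,S), with the following property: if (r₁, …, r_n) is a reduced increasing sequence in S such that every subsequence (r_{a₁}, …, r_{a_m}) with a₁ < a₂ < ⋯ < a_m and m(r_{a_i}, r_{a_{i+1}}) = ∞ for all i has at most b elements, then n ≤ f(b). -/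
section Aux

variable {B W : Type*} [Group W] {M : CoxeterMatrix B} (cs : CoxeterSystem M W)

private lemma commute_simple_of_M_eq_two {i j : B} (h : M i j = 2) :
    Commute (cs.simple i) (cs.simple j) := by
  have := cs.simple_mul_simple_pow i j
  rw [h] at this
  have h2 : cs.simple i * cs.simple j * (cs.simple i * cs.simple j) = 1 := by
    rw [← sq]; exact this
  have : cs.simple i * cs.simple j = (cs.simple i * cs.simple j)⁻¹ :=
    eq_inv_of_mul_eq_one_left h2
  rw [mul_inv_rev, cs.inv_simple, cs.inv_simple] at this
  exact this

private lemma commute_wordProd {i : B} {l : List B}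
    (h : ∀ t ∈ l, Commute (cs.simple i) (cs.simple t)) :
    Commute (cs.simple i) (cs.wordProd l) := by
  apply Commute.list_prod_right
  intro x hx
  simp only [List.mem_map] at hx
  obtain ⟨t, ht, rfl⟩ := hx
  exact h t ht

/-- If all letters between two occurrences of `s` commute with `s`, the word is not reduced. -/
private lemma not_isReduced_of_commute {s : B} {mid rest : List B}
    (h : ∀ t ∈ mid, Commute (cs.simple s) (cs.simple t)) :
    ¬ cs.IsReduced (s :: mid ++ s :: rest) := by
  intro hred
  have hprod : cs.wordProd (s :: mid ++ s :: rest) = cs.wordProd (mid ++ rest) := by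
    rw [List.cons_append, cs.wordProd_cons, cs.wordProd_append, cs.wordProd_cons,
      cs.wordProd_append]
    have hc := commute_wordProd cs h
    calc cs.simple s * (cs.wordProd mid * (cs.simple s * cs.wordProd rest))
        = cs.simple s * cs.wordProd mid * cs.simple s * cs.wordProd rest := by group
      _ = cs.wordProd mid * cs.simple s * cs.simple s * cs.wordProd rest := by rw [hc.eq]
      _ = cs.wordProd mid * (cs.simple s * cs.simple s) * cs.wordProd rest := by group
      _ = cs.wordProd mid * cs.wordProd rest := by
          rw [cs.simple_mul_simple_self]; group
  have h1 : cs.length (cs.wordProd (s :: mid ++ s :: rest)) ≤ mid.length + rest.length := by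
    rw [hprod]
    calc cs.length (cs.wordProd (mid ++ rest)) ≤ (mid ++ rest).length :=
          cs.length_wordProd_le _
      _ = mid.length + rest.length := List.length_append
  rw [hred] at h1
  simp only [List.length_cons, List.length_append] at h1
  omega

private lemma first_split {α : Type*} {a : α} :
    ∀ {l : List α}, a ∈ l → ∃ u v, l = u ++ a :: v ∧ a ∉ u := by
  intro l
  induction l with
  | nil => intro h; simp at h
  | cons x xs ih =>
    intro h
    by_cases hx : x = a
    · exact ⟨[], xs, by simp [hx], by simp⟩
    · have hax : a ∈ xs := by
        rcases List.mem_cons.mp h with h' | h'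
        · exact absurd h'.symm hx
        · exact h'
      obtain ⟨u, v, huv, hu⟩ := ih hax
      refine ⟨x :: u, v, by simp [huv], ?_⟩
      intro hmem
      rcases List.mem_cons.mp hmem with h' | h'
      · exact hx h'.symm
      · exact hu h'

open Classical in
/-- Key lemma: a letter occurring `k` times in a reduced word (right-angled case) yields a
non-commuting chain of length `2k - 1` starting with that letter. -/
private lemma chain_of_count (hra : M.IsRightAngled) (s : B) :
    ∀ n (ω : List B), ω.length ≤ n → cs.IsReduced ω → s ∈ ω →
    ∃ χ : List B, χ.Sublist ω ∧ χ.Chain' (fun x y => M x y = 0) ∧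
      χ.length + 1 = 2 * ω.count s ∧ χ.head? = some s := by
  intro n
  induction n with
  | zero =>
    intro ω hlen _ hs
    rw [Nat.le_zero, List.length_eq_zero_iff] at hlen
    subst hlen
    simp at hs
  | succ n ih =>
    intro ω hlen hred hs
    match ω, hs with
    | x :: ω', hs =>
      by_cases hx : x = s
      · subst hx
        by_cases hs' : x ∈ ω'
        · -- split ω' at the first occurrence of x
          obtain ⟨mid, rest, rfl, hmid⟩ := first_split hs'
          -- find a non-commuting letter t in mid
          have hT : ∃ t ∈ mid, M x t = 0 := by
            by_contra hT
            push_neg at hT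
            apply not_isReduced_of_commute cs (s := x) (mid := mid) (rest := rest) _ hred
            intro t ht
            have hts : t ≠ x := fun h => hmid (h ▸ ht)
            rcases hra x t (Ne.symm hts) with h2 | h0
            · exact commute_simple_of_M_eq_two cs h2
            · exact absurd h0 (hT t ht)
          obtain ⟨t, htmid, hMst⟩ := hT
          -- the suffix x :: rest is reduced
          have hdrop : (x :: (mid ++ x :: rest)).drop (mid.length + 1) = x :: rest := by
            simp [List.drop_append]
          have hred' : cs.IsReduced (x :: rest) := by
            have := CoxeterSystem.IsReduced.drop hred (j := mid.length + 1)
            rwa [hdrop] at this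
          have hlen' : (x :: rest).length ≤ n := by
            simp only [List.length_cons, List.length_append] at hlen ⊢
            omega
          obtain ⟨χ', hsub', hchain', hcount', hhead'⟩ :=
            ih (x :: rest) hlen' hred' (List.mem_cons_self (a := x) (l := rest))
          cases χ' with
          | nil => simp at hhead'
          | cons a χ'' =>
          obtain rfl : a = x := by simpa using hhead'
          refine ⟨a :: t :: a :: χ'', ?_, ?_, ?_, rfl⟩
          · -- sublist
            apply List.Sublist.cons₂
            obtain ⟨m1, m2, rfl⟩ := List.append_of_mem htmid
            have h1 : (t :: a :: χ'').Sublist (t :: (m2 ++ a :: rest)) :=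
              List.Sublist.cons₂ t (hsub'.trans (List.sublist_append_right m2 _))
            have h2 : (t :: (m2 ++ a :: rest)).Sublist (m1 ++ (t :: (m2 ++ a :: rest))) :=
              List.sublist_append_right _ _
            have heq : (m1 ++ t :: m2) ++ a :: rest = m1 ++ (t :: (m2 ++ a :: rest)) := by
              simp
            rw [heq]
            exact h1.trans h2
          · -- chain
            exact List.isChain_cons_cons.mpr ⟨hMst, List.isChain_cons_cons.mpr ⟨M.symmetric t a ▸ hMst, hchain'⟩⟩
          · -- count
            have hmidcount : mid.count a = 0 := List.count_eq_zero.mpr hmid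
            simp only [List.count_cons_self, List.count_append, hmidcount,
              List.length_cons] at hcount' ⊢
            omega
        · -- x occurs only once
          refine ⟨[x], List.Sublist.cons₂ x (List.nil_sublist ω'), List.isChain_singleton x,
            ?_, rfl⟩
          have : ω'.count x = 0 := List.count_eq_zero.mpr hs'
          simp [this]
      · -- head is not s
        have hs' : s ∈ ω' := by
          rcases List.mem_cons.mp hs with h' | h'
          · exact absurd h'.symm hx
          · exact h'
        have hred' : cs.IsReduced ω' := by
          have := CoxeterSystem.IsReduced.drop hred (j := 1)
          simpa using this
        have hlen' : ω'.length ≤ n := by simp at hlen; omega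
        obtain ⟨χ, hsub, hchain, hcount, hhead⟩ := ih ω' hlen' hred' hs'
        refine ⟨χ, hsub.trans (List.sublist_cons_self x ω'), hchain, ?_, hhead⟩
        rw [List.count_cons_of_ne hx]
        exact hcount

private lemma isReduced_of_increasing (ω : List B)
    (h : ∀ i < ω.length,
      cs.length (cs.wordProd (ω.take i)) < cs.length (cs.wordProd (ω.take (i + 1)))) :
    cs.IsReduced ω := by
  have key : ∀ n ≤ ω.length, cs.length (cs.wordProd (ω.take n)) = n := by
    intro n hn
    induction n with
    | zero => simp
    | succ i ihi =>
      have hi : i < ω.length := by omega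
      have hih := ihi (by omega)
      have htake : ω.take (i + 1) = ω.take i ++ [ω.get ⟨i, hi⟩] := by
        rw [List.take_succ]
        simp [List.getElem?_eq_getElem hi]
      have hle : cs.length (cs.wordProd (ω.take (i + 1))) ≤ i + 1 := by
        rw [htake, cs.wordProd_append]
        calc cs.length (cs.wordProd (ω.take i) * cs.wordProd [ω.get ⟨i, hi⟩])
            ≤ cs.length (cs.wordProd (ω.take i)) + cs.length (cs.wordProd [ω.get ⟨i, hi⟩]) :=
              cs.length_mul_le _ _
          _ ≤ i + 1 := by
              have := cs.length_wordProd_le [ω.get ⟨i, hi⟩]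
              simp only [List.length_singleton] at this
              omega
      have hlt := h i hi
      omega
  have := key ω.length le_rfl
  rwa [List.take_length] at this

end Aux

/-- Lemma 2.17: if every "non-commuting chain" subsequence of a reduced increasing sequence
has at most `b` elements, then the length of the sequence is bounded by some `f b`
depending only on `b` and on the Coxeter system. -/
theorem length_le_of_chains_bounded {B W : Type*} [Group W] [Fintype B] {M : CoxeterMatrix B}
    (cs : CoxeterSystem M W) (hra : M.IsRightAngled) (b : ℕ) :
    ∃ f : ℕ, 0 < f ∧ ∀ ω : List B,
      (∀ i < ω.length,
        cs.length (cs.wordProd (ω.take i)) < cs.length (cs.wordProd (ω.take (i + 1)))) →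
      (∀ χ : List B, χ.Sublist ω → χ.Chain' (fun x y => M x y = 0) → χ.length ≤ b) →
      ω.length ≤ f := by
  classical
  refine ⟨Fintype.card B * (b + 1) + 1, by positivity, ?_⟩
  intro ω hinc hchains
  have hred : cs.IsReduced ω := isReduced_of_increasing cs ω hinc
  -- each letter occurs at most b + 1 times
  have hcount : ∀ a : B, ω.count a ≤ b + 1 := by
    intro a
    by_cases ha : a ∈ ω
    · obtain ⟨χ, hsub, hchain, hlen, _⟩ :=
        chain_of_count cs hra a ω.length ω le_rfl hred ha
      have := hchains χ hsub hchain
      omega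
    · simp [List.count_eq_zero.mpr ha]
  calc ω.length = ∑ a ∈ ω.toFinset, ω.count a := (List.sum_toFinset_count_eq_length ω).symm
    _ ≤ ∑ a ∈ ω.toFinset, (b + 1) := Finset.sum_le_sum (fun a _ => hcount a)
    _ = ω.toFinset.card * (b + 1) := by rw [Finset.sum_const, smul_eq_mul]
    _ ≤ Fintype.card B * (b + 1) := by
        exact Nat.mul_le_mul_right _ (Finset.card_le_card (Finset.subset_univ _))
    _ ≤ Fintype.card B * (b + 1) + 1 := Nat.le_succ _
end

section
/- Let (W,S) be a right-angled Coxeter system with S finite. Then for every n ∈ ℕ the set {w ∈ W : F#(w) ≤ n} is finite; more precisely, it is contained in the ball {w ∈ W : ℓ(w) ≤ d(n)} for some d(n) ∈ ℕ depending only on n and (W,S). -/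
set_option linter.unusedSectionVars false
set_option linter.unusedVariables false

namespace RACGproof

open List

variable {B : Type*} [Fintype B]

/-- The integral "cosine" matrix of a right-angled Coxeter matrix. -/
noncomputable def kappa (M : CoxeterMatrix B) (j i : B) : ℤ :=
  open Classical in if j = i then 1 else if M j i = 0 then -1 else 0

/-- Basis vector. -/
noncomputable def alphaV (i : B) : B → ℤ :=
  open Classical in fun j => if j = i then 1 else 0

@[simp] lemma kappa_self (M : CoxeterMatrix B) (i : B) : kappa M i i = 1 := by
  simp [kappa]

lemma kappa_of_two (M : CoxeterMatrix B) {j i : B} (hji : j ≠ i) (h : M j i ≠ 0) :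
    kappa M j i = 0 := by
  simp [kappa, hji, h]

lemma kappa_of_zero (M : CoxeterMatrix B) {j i : B} (hji : j ≠ i) (h : M j i = 0) :
    kappa M j i = -1 := by
  simp [kappa, hji, h]

lemma alphaV_nonneg (i : B) : (0 : B → ℤ) ≤ alphaV i := by
  intro j
  simp only [alphaV, Pi.zero_apply]
  split <;> simp

lemma alphaV_ne_zero (i : B) : alphaV i ≠ 0 := by
  intro h
  have := congrFun h i
  simp [alphaV] at this

/-- The linear functional `v ↦ 2⟨v, αᵢ⟩`. -/
noncomputable def cf (M : CoxeterMatrix B) (i : B) : (B → ℤ) →ₗ[ℤ] ℤ where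
  toFun v := ∑ j, v j * kappa M j i
  map_add' u v := by
    simp [add_mul, Finset.sum_add_distrib]
  map_smul' a v := by
    simp [Finset.mul_sum, mul_assoc]

lemma cf_alpha (M : CoxeterMatrix B) (i j : B) : cf M i (alphaV j) = kappa M j i := by
  classical
  simp only [cf, LinearMap.coe_mk, AddHom.coe_mk, alphaV]
  rw [Finset.sum_eq_single j]
  · simp
  · intro b _ hb
    simp [hb]
  · intro h
    simp at h

/-- The reflection attached to a generator, acting on `B → ℤ`. -/
noncomputable def sigmaE (M : CoxeterMatrix B) (i : B) : Module.End ℤ (B → ℤ) where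
  toFun v := v - (2 * cf M i v) • alphaV i
  map_add' u v := by
    simp only [map_add]
    module
  map_smul' a v := by
    simp only [map_smul, RingHom.id_apply, smul_eq_mul]
    module

lemma sigmaE_apply (M : CoxeterMatrix B) (i : B) (v : B → ℤ) :
    sigmaE M i v = v - (2 * cf M i v) • alphaV i := rfl

@[simp] lemma sigmaE_alpha_self (M : CoxeterMatrix B) (i : B) :
    sigmaE M i (alphaV i) = -(alphaV i) := by
  rw [sigmaE_apply, cf_alpha, kappa_self]
  module

lemma sigmaE_alpha_of_two (M : CoxeterMatrix B) {j i : B} (hji : j ≠ i) (h : M j i ≠ 0) :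
    sigmaE M i (alphaV j) = alphaV j := by
  rw [sigmaE_apply, cf_alpha, kappa_of_two M hji h]
  module

lemma sigmaE_alpha_of_zero (M : CoxeterMatrix B) {j i : B} (hji : j ≠ i) (h : M j i = 0) :
    sigmaE M i (alphaV j) = alphaV j + (2:ℤ) • alphaV i := by
  rw [sigmaE_apply, cf_alpha, kappa_of_zero M hji h]
  module

lemma sigmaE_sq (M : CoxeterMatrix B) (i : B) : sigmaE M i * sigmaE M i = 1 := by
  apply LinearMap.ext
  intro v
  have h1 : cf M i (sigmaE M i v) = -(cf M i v) := by
    rw [sigmaE_apply, map_sub, map_smul, cf_alpha, kappa_self]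
    simp; ring
  rw [Module.End.mul_apply]
  nth_rw 1 [sigmaE_apply]
  rw [h1, sigmaE_apply]
  simp only [Module.End.one_apply]
  module

lemma sigmaE_comm (M : CoxeterMatrix B) {i j : B} (hij : i ≠ j) (h2 : M i j = 2) :
    sigmaE M i * sigmaE M j = sigmaE M j * sigmaE M i := by
  have hji : M j i = 2 := by rw [M.symmetric]; exact h2
  have cij : cf M j (alphaV i) = 0 := by rw [cf_alpha, kappa_of_two M hij (by omega)]
  have cji : cf M i (alphaV j) = 0 := by
    rw [cf_alpha, kappa_of_two M (Ne.symm hij) (by omega)]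
  apply LinearMap.ext
  intro v
  have e1 : cf M i (sigmaE M j v) = cf M i v := by
    rw [sigmaE_apply, map_sub, map_smul, cji]; simp
  have e2 : cf M j (sigmaE M i v) = cf M j v := by
    rw [sigmaE_apply, map_sub, map_smul, cij]; simp
  rw [Module.End.mul_apply, Module.End.mul_apply]
  conv_lhs => rw [sigmaE_apply M i, e1, sigmaE_apply M j]
  conv_rhs => rw [sigmaE_apply M j, e2, sigmaE_apply M i]
  module

lemma sigmaE_liftable {M : CoxeterMatrix B} (hra : CoxeterMatrix.IsRightAngled M) :
    M.IsLiftable (sigmaE M) := by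
  intro i j
  rcases eq_or_ne i j with rfl | hij
  · rw [M.diagonal, pow_one, sigmaE_sq]
  · rcases hra i j hij with h2 | h0
    · rw [h2, pow_two, mul_assoc, ← mul_assoc (sigmaE M j), ← sigmaE_comm M hij h2,
        mul_assoc, sigmaE_sq, mul_one, sigmaE_sq]
    · rw [h0, pow_zero]

end RACGproof

section Part2

namespace RACGproof

open List CoxeterSystem

variable {B : Type*} [Fintype B] {W : Type*} [Group W] {M : CoxeterMatrix B}
  (cs : CoxeterSystem M W)

local prefix:100 "ℓ" => cs.length
local prefix:100 "π" => cs.wordProd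

/-- The reflection representation of a right-angled Coxeter group on `B → ℤ`. -/
noncomputable def rho (hra : CoxeterMatrix.IsRightAngled M) :
    W →* Module.End ℤ (B → ℤ) :=
  cs.lift ⟨sigmaE M, sigmaE_liftable hra⟩

variable (hra : CoxeterMatrix.IsRightAngled M)

lemma rho_simple (i : B) : rho cs hra (cs.simple i) = sigmaE M i :=
  cs.lift_apply_simple _ i

lemma rho_alpha_ne_zero (w : W) (i : B) : rho cs hra w (alphaV i) ≠ 0 := by
  intro h
  have h2 : rho cs hra w⁻¹ (rho cs hra w (alphaV i)) = alphaV i := by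
    rw [← Module.End.mul_apply, ← map_mul, inv_mul_cancel, map_one, Module.End.one_apply]
  rw [h, map_zero] at h2
  exact alphaV_ne_zero i h2.symm

/-- Greedy decomposition with respect to a rank-2 parabolic. -/
lemma decomp (s t : B) : ∀ n (w : W), ℓ w = n →
    ∃ (v : W) (ξ : List B), (∀ c ∈ ξ, c = s ∨ c = t) ∧ w = v * π ξ ∧
      ℓ w = ℓ v + ξ.length ∧ cs.IsReduced ξ ∧
      ¬cs.IsRightDescent v s ∧ ¬cs.IsRightDescent v t := by
  intro n
  induction n using Nat.strong_induction_on with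
  | _ n ih =>
    intro w hw
    have key : ∀ c : B, (c = s ∨ c = t) → cs.IsRightDescent w c →
        ∃ (v : W) (ξ : List B), (∀ c ∈ ξ, c = s ∨ c = t) ∧ w = v * π ξ ∧
          ℓ w = ℓ v + ξ.length ∧ cs.IsReduced ξ ∧
          ¬cs.IsRightDescent v s ∧ ¬cs.IsRightDescent v t := by
      intro c hc hdesc
      have hlen : ℓ (w * cs.simple c) + 1 = ℓ w := (cs.isRightDescent_iff).mp hdesc
      obtain ⟨v, ξ', hlet, heq, hadd, _, hvs, hvt⟩ :=
        ih (ℓ (w * cs.simple c)) (by omega) (w * cs.simple c) rfl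
      refine ⟨v, ξ' ++ [c], ?_, ?_, ?_, ?_, hvs, hvt⟩
      · intro x hx
        rcases List.mem_append.mp hx with h | h
        · exact hlet x h
        · simp at h; subst h; exact hc
      · rw [cs.wordProd_append, cs.wordProd_singleton, ← mul_assoc, ← heq,
          cs.simple_mul_simple_cancel_right]
      · simp only [List.length_append, List.length_singleton]
        omega
      · -- reducedness
        have hw' : w = v * (π ξ' * cs.simple c) := by
          rw [← mul_assoc, ← heq, cs.simple_mul_simple_cancel_right]
        have h1 : v * π (ξ' ++ [c]) = w := by
          rw [cs.wordProd_append, cs.wordProd_singleton, ← hw']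
        have h2 : ℓ w ≤ ℓ v + ℓ (π (ξ' ++ [c])) := by
          calc ℓ w = ℓ (v * π (ξ' ++ [c])) := by rw [h1]
          _ ≤ _ := cs.length_mul_le _ _
        have h3 : ℓ (π (ξ' ++ [c])) ≤ (ξ' ++ [c]).length := cs.length_wordProd_le _
        unfold CoxeterSystem.IsReduced
        simp only [List.length_append, List.length_singleton] at *
        omega
    by_cases hs : cs.IsRightDescent w s
    · exact key s (Or.inl rfl) hs
    by_cases ht : cs.IsRightDescent w t
    · exact key t (Or.inr rfl) ht
    · exact ⟨w, [], by simp, by simp, by simp, by simp [CoxeterSystem.IsReduced], hs, ht⟩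

lemma simple_comm {i j : B} (h2 : M i j = 2) :
    cs.simple i * cs.simple j = cs.simple j * cs.simple i := by
  have h := cs.simple_mul_simple_pow i j
  rw [h2, pow_two] at h
  have : cs.simple i * cs.simple j = (cs.simple i * cs.simple j)⁻¹ := by
    rw [eq_inv_iff_mul_eq_one]; exact h
  rw [this, mul_inv_rev, cs.inv_simple, cs.inv_simple]

lemma mem_four {s t : B} (h2 : M s t = 2) : ∀ ξ : List B, (∀ c ∈ ξ, c = s ∨ c = t) →
    π ξ = 1 ∨ π ξ = cs.simple s ∨ π ξ = cs.simple t ∨ π ξ = cs.simple s * cs.simple t := by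
  intro ξ
  induction ξ with
  | nil => intro _; left; simp
  | cons c ξ' ih =>
    intro hlet
    have hc : c = s ∨ c = t := hlet c (by simp)
    have hξ' : ∀ x ∈ ξ', x = s ∨ x = t := fun x hx => hlet x (by simp [hx])
    rw [cs.wordProd_cons]
    rcases hc with rfl | rfl
    · rcases ih hξ' with h | h | h | h <;> rw [h]
      · right; left; simp
      · left; exact cs.simple_mul_simple_self c
      · right; right; right; rfl
      · right; right; left; rw [← mul_assoc, cs.simple_mul_simple_self, one_mul]
    · rcases ih hξ' with h | h | h | h <;> rw [h]
      · right; right; left; simp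
      · right; right; right; rw [simple_comm cs h2]
      · left; exact cs.simple_mul_simple_self c
      · right; left
        rw [← mul_assoc, ← simple_comm cs h2, mul_assoc, cs.simple_mul_simple_self, mul_one]

lemma rank2_two {s t : B} (hst : s ≠ t) (h2 : M s t = 2) (ξ : List B)
    (hlet : ∀ c ∈ ξ, c = s ∨ c = t) (hred : cs.IsReduced ξ)
    (hnd : ¬cs.IsRightDescent (π ξ) s) :
    rho cs hra (π ξ) (alphaV s) = alphaV s := by
  have hlen : ξ.length ≤ 2 := by
    have h4 := mem_four cs h2 ξ hlet
    have : ℓ (π ξ) ≤ 2 := by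
      rcases h4 with h | h | h | h <;> rw [h]
      · simp
      · simp
      · simp
      · have := cs.length_mul_le (cs.simple s) (cs.simple t)
        simpa using this
    rw [hred] at this; exact this
  match ξ, hlen with
  | [], _ => simp only [wordProd_nil, map_one, Module.End.one_apply]
  | [c], _ =>
    rcases hlet c (by simp) with rfl | rfl
    · exfalso; apply hnd
      have h1 : ℓ (π [c]) = 1 := hred
      unfold CoxeterSystem.IsRightDescent
      rw [h1, cs.wordProd_singleton, cs.simple_mul_simple_self]
      simp
    · rw [cs.wordProd_singleton, rho_simple]
      refine sigmaE_alpha_of_two M hst ?_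
      omega
  | [c₁, c₂], _ =>
    exfalso
    have hπ : π [c₁, c₂] = cs.simple c₁ * cs.simple c₂ := by
      rw [cs.wordProd_cons, cs.wordProd_singleton]
    have hl2 : ℓ (cs.simple c₁ * cs.simple c₂) = 2 := by
      rw [← hπ]; exact hred
    have hc₁ := hlet c₁ (by simp)
    have hc₂ := hlet c₂ (by simp)
    rcases hc₁ with rfl | rfl <;> rcases hc₂ with rfl | rfl
    · rw [cs.simple_mul_simple_self] at hl2; simp at hl2
    · apply hnd
      unfold CoxeterSystem.IsRightDescent
      rw [hπ]
      have hx : cs.simple c₁ * cs.simple c₂ * cs.simple c₁ = cs.simple c₂ := by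
        rw [mul_assoc, ← simple_comm cs h2, ← mul_assoc, cs.simple_mul_simple_self, one_mul]
      rw [hx, hl2, cs.length_simple]; omega
    · apply hnd
      unfold CoxeterSystem.IsRightDescent
      rw [hπ]
      have hx : cs.simple c₁ * cs.simple c₂ * cs.simple c₂ = cs.simple c₁ := by
        rw [mul_assoc, cs.simple_mul_simple_self, mul_one]
      rw [hx, hl2, cs.length_simple]; omega
    · rw [cs.simple_mul_simple_self] at hl2; simp at hl2

end RACGproof

end Part2

section Part3

namespace RACGproof

open List CoxeterSystem

variable {B : Type*} [Fintype B] {W : Type*} [Group W] {M : CoxeterMatrix B}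
  (cs : CoxeterSystem M W) (hra : CoxeterMatrix.IsRightAngled M)

local prefix:100 "ℓ" => cs.length
local prefix:100 "π" => cs.wordProd

lemma combo_nonneg {a b : ℤ} (ha : 0 ≤ a) (hb : 0 ≤ b) (s t : B) :
    (0 : B → ℤ) ≤ a • alphaV s + b • alphaV t := by
  intro j
  simp only [Pi.add_apply, Pi.smul_apply, smul_eq_mul, Pi.zero_apply]
  have h1 := alphaV_nonneg s j
  have h2 := alphaV_nonneg t j
  simp only [Pi.zero_apply] at h1 h2
  nlinarith

/-- The key rank-2 computation in the infinite dihedral case. -/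
lemma rank2_zero_aux {s t : B} (hst : s ≠ t) (h0 : M s t = 0) :
    ∀ ξ : List B, (∀ c ∈ ξ, c = s ∨ c = t) → cs.IsReduced ξ → ξ.getLast? ≠ some s →
    ∃ a b : ℤ, 0 ≤ a ∧ 0 ≤ b ∧
      rho cs hra (π ξ) (alphaV s) = a • alphaV s + b • alphaV t ∧
      (ξ = [] → a = 1 ∧ b = 0) ∧
      (ξ.head? = some s → b ≤ a ∧ a ≤ 2*b) ∧
      (ξ.head? = some t → a ≤ b ∧ b ≤ 2*a) := by
  have hts : t ≠ s := hst.symm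
  have h0' : M t s = 0 := by rw [M.symmetric]; exact h0
  intro ξ
  induction ξ with
  | nil =>
    intro _ _ _
    refine ⟨1, 0, by omega, by omega, ?_, fun _ => ⟨rfl, rfl⟩, by simp, by simp⟩
    simp only [wordProd_nil, map_one, Module.End.one_apply]
    module
  | cons c ξ' ih =>
    intro hlet hred hlast
    have hc : c = s ∨ c = t := hlet c (by simp)
    have hlet' : ∀ x ∈ ξ', x = s ∨ x = t := fun x hx => hlet x (by simp [hx])
    have hred' : cs.IsReduced ξ' := by
      have := hred.drop 1
      simpa using this
    have hlast' : ξ'.getLast? ≠ some s := by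
      cases ξ' with
      | nil => simp
      | cons d l => rw [← List.getLast?_cons_cons (a := c)]; exact hlast
    have hhead' : ξ'.head? ≠ some c := by
      cases ξ' with
      | nil => simp
      | cons d l =>
        intro h
        simp only [List.head?_cons, Option.some.injEq] at h
        subst h
        have hπ : π (d :: d :: l) = π l := by
          rw [cs.wordProd_cons, cs.wordProd_cons, cs.simple_mul_simple_cancel_left]
        have h1 : ℓ (π l) ≤ l.length := cs.length_wordProd_le l
        have h2 := hred
        unfold CoxeterSystem.IsReduced at h2
        rw [hπ] at h2
        simp at h2
        omega
    obtain ⟨a', b', ha', hb', heq', hnil', hhs', hht'⟩ := ih hlet' hred' hlast'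
    have hstep : rho cs hra (π (c :: ξ')) (alphaV s)
        = sigmaE M c (a' • alphaV s + b' • alphaV t) := by
      rw [cs.wordProd_cons, map_mul, Module.End.mul_apply, rho_simple, heq']
    rcases hc with rfl | rfl
    · -- c = s
      have hne : ξ' ≠ [] := by
        rintro rfl
        exact hlast (by simp)
      obtain ⟨d, l, rfl⟩ := List.exists_cons_of_ne_nil hne
      have hd : d = t := by
        rcases hlet' d (by simp) with rfl | rfl
        · exact absurd (by simp : (d :: l).head? = some d) hhead'
        · rfl
      subst hd
      obtain ⟨h1, h2⟩ := hht' rfl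
      refine ⟨2*b' - a', b', by omega, hb', ?_, by simp, fun _ => by omega, ?_⟩
      · rw [hstep, map_add, map_smul, map_smul, sigmaE_alpha_self,
          sigmaE_alpha_of_zero M hts h0']
        module
      · intro h
        simp only [List.head?_cons, Option.some.injEq] at h
        exact absurd h hst
    · -- c = t
      cases ξ' with
      | nil =>
        obtain ⟨rfl, rfl⟩ := hnil' rfl
        refine ⟨1, 2, by omega, by omega, ?_, by simp, ?_, fun _ => by omega⟩
        · rw [hstep, map_add, map_smul, map_smul, sigmaE_alpha_self,
            sigmaE_alpha_of_zero M hst h0]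
          module
        · intro h
          simp only [List.head?_cons, Option.some.injEq] at h
          exact absurd h hts
      | cons d l =>
        have hd : d = s := by
          rcases hlet' d (by simp) with rfl | rfl
          · rfl
          · exact absurd (by simp : (d :: l).head? = some d) hhead'
        subst hd
        obtain ⟨h1, h2⟩ := hhs' rfl
        refine ⟨a', 2*a' - b', ha', by omega, ?_, by simp, ?_, fun _ => by omega⟩
        · rw [hstep, map_add, map_smul, map_smul, sigmaE_alpha_self,
            sigmaE_alpha_of_zero M hst h0]
          module
        · intro h
          simp only [List.head?_cons, Option.some.injEq] at h
          exact absurd h hts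

lemma rank2_zero {s t : B} (hst : s ≠ t) (h0 : M s t = 0) (ξ : List B)
    (hlet : ∀ c ∈ ξ, c = s ∨ c = t) (hred : cs.IsReduced ξ)
    (hlast : ξ.getLast? ≠ some s) :
    ∃ a b : ℤ, 0 ≤ a ∧ 0 ≤ b ∧
      rho cs hra (π ξ) (alphaV s) = a • alphaV s + b • alphaV t := by
  obtain ⟨a, b, ha, hb, heq, _⟩ := rank2_zero_aux cs hra hst h0 ξ hlet hred hlast
  exact ⟨a, b, ha, hb, heq⟩

/-- If the last letter of a reduced word is `c`, then `c` is a right descent. -/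
lemma descent_of_getLast {ξ : List B} {c : B} (hred : cs.IsReduced ξ)
    (h : ξ.getLast? = some c) : cs.IsRightDescent (π ξ) c := by
  obtain ⟨ξ₀, rfl⟩ := List.getLast?_eq_some_iff.mp h
  have hπ : π (ξ₀ ++ [c]) * cs.simple c = π ξ₀ := by
    rw [cs.wordProd_append, cs.wordProd_singleton, cs.simple_mul_simple_cancel_right]
  unfold CoxeterSystem.IsRightDescent
  rw [hπ]
  have h1 : ℓ (π ξ₀) ≤ ξ₀.length := cs.length_wordProd_le _
  have h2 : ℓ (π (ξ₀ ++ [c])) = ξ₀.length + 1 := by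
    rw [hred]; simp
  omega

/-- The positivity theorem: if `i` is not a right descent of `w`, then `w αᵢ ≥ 0`. -/
theorem rho_nonneg : ∀ n (w : W) (i : B), ℓ w = n → ¬cs.IsRightDescent w i →
    (0 : B → ℤ) ≤ rho cs hra w (alphaV i) := by
  intro n
  induction n using Nat.strong_induction_on with
  | _ n ih =>
    intro w i hw hni
    by_cases hw1 : w = 1
    · subst hw1
      rw [map_one, Module.End.one_apply]
      exact alphaV_nonneg i
    obtain ⟨t, ht⟩ := cs.exists_rightDescent_of_ne_one hw1
    have hit : i ≠ t := by rintro rfl; exact hni ht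
    obtain ⟨v, ξ, hlet, heq, hadd, hredξ, hvs, hvt⟩ := decomp cs i t (ℓ w) w rfl
    have hξne : ξ ≠ [] := by
      rintro rfl
      have : w = v := by simpa using heq
      exact hvt (this ▸ ht)
    have hξpos : 0 < ξ.length := List.length_pos_iff.mpr hξne
    have hlv : ℓ v < n := by omega
    have hvi' := ih (ℓ v) (by omega) v i rfl hvs
    have hvt' := ih (ℓ v) (by omega) v t rfl hvt
    have hxnd : ¬cs.IsRightDescent (π ξ) i := by
      intro hd
      apply hni
      have h1 : ℓ (π ξ * cs.simple i) + 1 = ℓ (π ξ) := (cs.isRightDescent_iff).mp hd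
      have h2 : ℓ (w * cs.simple i) ≤ ℓ v + ℓ (π ξ * cs.simple i) := by
        rw [heq, mul_assoc]
        exact cs.length_mul_le _ _
      have h3 : ℓ (π ξ) = ξ.length := hredξ
      unfold CoxeterSystem.IsRightDescent
      omega
    have hrw : rho cs hra w (alphaV i) = rho cs hra v (rho cs hra (π ξ) (alphaV i)) := by
      rw [heq, map_mul, Module.End.mul_apply]
    rcases hra i t hit with h2 | h0
    · rw [hrw, rank2_two cs hra hit h2 ξ hlet hredξ hxnd]
      exact hvi'
    · have hlast : ξ.getLast? ≠ some i := by
        intro hl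
        exact hxnd (descent_of_getLast cs hredξ hl)
      obtain ⟨a, b, ha, hb, heq2⟩ := rank2_zero cs hra hit h0 ξ hlet hredξ hlast
      rw [hrw, heq2, map_add, map_smul, map_smul]
      intro j
      simp only [Pi.add_apply, Pi.smul_apply, smul_eq_mul, Pi.zero_apply]
      have g1 := hvi' j
      have g2 := hvt' j
      simp only [Pi.zero_apply] at g1 g2
      nlinarith

lemma rho_nonpos_of_descent {w : W} {i : B} (hd : cs.IsRightDescent w i) :
    rho cs hra w (alphaV i) ≤ 0 := by
  have hnd : ¬cs.IsRightDescent (w * cs.simple i) i :=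
    (cs.isRightDescent_iff_not_isRightDescent_mul).mp hd
  have h := rho_nonneg cs hra (ℓ (w * cs.simple i)) (w * cs.simple i) i rfl hnd
  have hww : w * cs.simple i * cs.simple i = w := cs.simple_mul_simple_cancel_right i
  have : rho cs hra w (alphaV i) = -(rho cs hra (w * cs.simple i) (alphaV i)) := by
    rw [← hww, map_mul, Module.End.mul_apply, rho_simple, sigmaE_alpha_self, map_neg, hww]
  rw [this]
  exact neg_nonpos.mpr h

lemma descent_iff_rho {w : W} {i : B} :
    cs.IsRightDescent w i ↔ rho cs hra w (alphaV i) ≤ 0 := by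
  constructor
  · exact rho_nonpos_of_descent cs hra
  · intro h
    by_contra hnd
    have h2 := rho_nonneg cs hra (ℓ w) w i rfl hnd
    exact rho_alpha_ne_zero cs hra w i (le_antisymm h h2)

lemma not_descent_iff_rho {w : W} {i : B} :
    ¬cs.IsRightDescent w i ↔ (0 : B → ℤ) ≤ rho cs hra w (alphaV i) := by
  constructor
  · intro h; exact rho_nonneg cs hra (ℓ w) w i rfl h
  · intro h hd
    exact rho_alpha_ne_zero cs hra w i
      (le_antisymm (rho_nonpos_of_descent cs hra hd) h)

include hra in
lemma no_two_zero_descents {w : W} {r t : B} (hrt : r ≠ t) (h0 : M r t = 0)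
    (hr : cs.IsRightDescent w r) (ht : cs.IsRightDescent w t) : False := by
  have h0' : M t r = 0 := by rw [M.symmetric]; exact h0
  obtain ⟨v, ξ, hlet, heq, hadd, hredξ, hvs, hvt⟩ := decomp cs r t (ℓ w) w rfl
  have hvr' := rho_nonneg cs hra (ℓ v) v r rfl hvs
  have hvt' := rho_nonneg cs hra (ℓ v) v t rfl hvt
  -- both descents transfer to x = π ξ
  have transfer : ∀ (s' t' : B), s' ≠ t' → M s' t' = 0 →
      (∀ c ∈ ξ, c = s' ∨ c = t') →
      (0:B → ℤ) ≤ rho cs hra v (alphaV s') → (0:B→ℤ) ≤ rho cs hra v (alphaV t') →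
      cs.IsRightDescent w s' → cs.IsRightDescent (π ξ) s' := by
    intro s' t' hst' h0'' hlet'' hv1 hv2 hws'
    by_contra hnd
    have hlast : ξ.getLast? ≠ some s' := by
      intro hl
      exact hnd (descent_of_getLast cs hredξ hl)
    obtain ⟨a, b, ha, hb, heq2⟩ := rank2_zero cs hra hst' h0'' ξ hlet'' hredξ hlast
    have : (0:B→ℤ) ≤ rho cs hra w (alphaV s') := by
      rw [heq, map_mul, Module.End.mul_apply, heq2, map_add, map_smul, map_smul]
      intro j
      simp only [Pi.add_apply, Pi.smul_apply, smul_eq_mul, Pi.zero_apply]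
      have g1 := hv1 j
      have g2 := hv2 j
      simp only [Pi.zero_apply] at g1 g2
      nlinarith
    exact ((not_descent_iff_rho cs hra).mpr this) hws'
  have hxr : cs.IsRightDescent (π ξ) r := transfer r t hrt h0 hlet hvr' hvt' hr
  have hxt : cs.IsRightDescent (π ξ) t :=
    transfer t r hrt.symm h0' (fun c hc => (hlet c hc).symm) hvt' hvr' ht
  have hξne : ξ ≠ [] := by
    rintro rfl
    exact cs.not_isRightDescent_one r (by simpa using hxr)
  obtain ⟨c, hc⟩ : ∃ c, ξ.getLast? = some c := by
    cases h : ξ.getLast? with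
    | none => exact absurd (List.getLast?_eq_none_iff.mp h) hξne
    | some c => exact ⟨c, rfl⟩
  have hcmem : c = r ∨ c = t := by
    obtain ⟨ξ₀, rfl⟩ := List.getLast?_eq_some_iff.mp hc
    exact hlet c (by simp)
  rcases hcmem with hcr | hct
  · -- last letter r : t cannot be a descent of π ξ
    have hlast : ξ.getLast? ≠ some t := by
      rw [hc]
      intro hx
      exact hrt (hcr.symm.trans (Option.some.inj hx))
    obtain ⟨a, b, ha, hb, heq2⟩ := rank2_zero cs hra hrt.symm h0' ξ
      (fun c hc => (hlet c hc).symm) hredξ hlast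
    have : (0:B→ℤ) ≤ rho cs hra (π ξ) (alphaV t) := heq2 ▸ combo_nonneg ha hb t r
    exact ((not_descent_iff_rho cs hra).mpr this) hxt
  · have hlast : ξ.getLast? ≠ some r := by
      rw [hc]
      intro hx
      exact hrt ((hct.symm.trans (Option.some.inj hx)).symm)
    obtain ⟨a, b, ha, hb, heq2⟩ := rank2_zero cs hra hrt h0 ξ hlet hredξ hlast
    have : (0:B→ℤ) ≤ rho cs hra (π ξ) (alphaV r) := heq2 ▸ combo_nonneg ha hb r t
    exact ((not_descent_iff_rho cs hra).mpr this) hxr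

end RACGproof

end Part3

section Part4

namespace RACGproof

open List CoxeterSystem

variable {B : Type*} [Fintype B] {W : Type*} [Group W] {M : CoxeterMatrix B}
  (cs : CoxeterSystem M W) (hra : CoxeterMatrix.IsRightAngled M)

local prefix:100 "ℓ" => cs.length
local prefix:100 "π" => cs.wordProd

lemma getD_append_lt {l : List B} {l' : List B} {j : ℕ} (h : j < l.length) (d : B) :
    (l ++ l').getD j d = l.getD j d := by
  rw [List.getD_eq_getElem?_getD, List.getD_eq_getElem?_getD,
    List.getElem?_append_left h]

lemma getD_concat_length {l : List B} {t : B} (d : B) :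
    (l ++ [t]).getD l.length d = t := by
  rw [List.getD_eq_getElem?_getD, List.getElem?_concat_length]
  rfl

include hra in
lemma descent_position (d : B) : ∀ ω : List B, cs.IsReduced ω →
    ∀ r : B, cs.IsRightDescent (π ω) r →
    ∃ j, j < ω.length ∧ ω.getD j d = r ∧
      ∀ i, i < ω.length → j < i → M r (ω.getD i d) = 2 := by
  intro ω
  induction ω using List.reverseRecOn with
  | nil =>
    intro _ r hd
    exact absurd hd (by simpa using cs.not_isRightDescent_one r)
  | append_singleton χ t ih =>
    intro hred r hd
    have hredχ : cs.IsReduced χ := by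
      have := hred.take χ.length
      simpa [List.take_left] using this
    have hπ : π (χ ++ [t]) = π χ * cs.simple t := by
      rw [cs.wordProd_append, cs.wordProd_singleton]
    have hlen : ℓ (π (χ ++ [t])) = χ.length + 1 := by rw [hred]; simp
    have hlenχ : ℓ (π χ) = χ.length := hredχ
    have e1 : π (χ ++ [t]) * cs.simple t = π χ := by
      rw [hπ, cs.simple_mul_simple_cancel_right]
    have hdt : cs.IsRightDescent (π (χ ++ [t])) t := by
      unfold CoxeterSystem.IsRightDescent
      rw [e1, hlenχ, hlen]
      omega
    by_cases hrt : r = t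
    · subst hrt
      refine ⟨χ.length, by simp, getD_concat_length d, ?_⟩
      intro i hi hji
      simp at hi
      omega
    · have h2 : M r t = 2 := by
        rcases hra r t hrt with h2 | h0
        · exact h2
        · exact absurd (no_two_zero_descents cs hra hrt h0 hd hdt) (by simp)
      have hdχ : cs.IsRightDescent (π χ) r := by
        apply (descent_iff_rho cs hra).mpr
        have e2 : rho cs hra (π (χ ++ [t])) (alphaV r)
            = rho cs hra (π χ) (alphaV r) := by
          rw [hπ, map_mul, Module.End.mul_apply, rho_simple,
            sigmaE_alpha_of_two M hrt (by omega)]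
        rw [← e2]
        exact rho_nonpos_of_descent cs hra hd
      obtain ⟨j, hj, hlab, htail⟩ := ih hredχ r hdχ
      refine ⟨j, by simp; omega, by rw [getD_append_lt hj d]; exact hlab, ?_⟩
      intro i hi hji
      simp at hi
      rcases Nat.lt_or_ge i χ.length with h | h
      · rw [getD_append_lt h d]
        exact htail i h hji
      · have : i = χ.length := by omega
        subst this
        rw [getD_concat_length d]
        exact h2

lemma simple_commute_wordProd (r : B) : ∀ l : List B, (∀ c ∈ l, M r c = 2) →
    cs.simple r * π l = π l * cs.simple r := by
  intro l
  induction l with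
  | nil => simp
  | cons c l' ih =>
    intro h
    have hc : M r c = 2 := h c (by simp)
    have hl' : ∀ x ∈ l', M r x = 2 := fun x hx => h x (by simp [hx])
    rw [cs.wordProd_cons, ← mul_assoc, simple_comm cs hc, mul_assoc, ih hl',
      ← mul_assoc, mul_assoc]

/-- If the letter at position `j` commutes with all later letters, multiplying by it on the
right erases it. -/
lemma erase_tc (d : B) (ω : List B) (j : ℕ) (hj : j < ω.length)
    (htc : ∀ i, i < ω.length → j < i → M (ω.getD j d) (ω.getD i d) = 2) :
    π ω * cs.simple (ω.getD j d) = π (ω.eraseIdx j) := by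
  have hsplit : ω = ω.take j ++ ω.getD j d :: ω.drop (j + 1) := by
    conv_lhs => rw [← List.take_append_drop j ω]
    congr 1
    rw [← List.getElem_cons_drop hj]
    congr 1
    rw [List.getD_eq_getElem?_getD, List.getElem?_eq_getElem hj]
    rfl
  have hcomm : cs.simple (ω.getD j d) * π (ω.drop (j + 1)) =
      π (ω.drop (j + 1)) * cs.simple (ω.getD j d) := by
    apply simple_commute_wordProd
    intro c hc
    obtain ⟨i, hi, hci⟩ := List.mem_iff_getElem.mp hc
    have hlen : (ω.drop (j+1)).length = ω.length - (j+1) := by simp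
    have hgi : (ω.drop (j+1))[i] = ω[j + 1 + i]'(by omega) := List.getElem_drop ..
    have hc2 := htc (j + 1 + i) (by omega) (by omega)
    rw [← hci, hgi]
    have : ω.getD (j+1+i) d = ω[j+1+i]'(by omega) := by
      rw [List.getD_eq_getElem?_getD, List.getElem?_eq_getElem (by omega)]
      rfl
    rw [← this]
    exact hc2
  have heq : π ω = π (ω.take j) * π (ω.drop (j+1)) * cs.simple (ω.getD j d) := by
    conv_lhs => rw [hsplit]
    rw [cs.wordProd_append, cs.wordProd_cons, ← mul_assoc, mul_assoc (π (ω.take j)),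
      hcomm, ← mul_assoc, mul_assoc]
  rw [heq, mul_assoc, cs.simple_mul_simple_self, mul_one, ← cs.wordProd_append,
    ← List.eraseIdx_eq_take_drop_succ]

include hra in
lemma erase_tc_reduced (d : B) {ω : List B} (hred : cs.IsReduced ω) (j : ℕ)
    (hj : j < ω.length)
    (htc : ∀ i, i < ω.length → j < i → M (ω.getD j d) (ω.getD i d) = 2) :
    cs.IsRightDescent (π ω) (ω.getD j d) ∧ cs.IsReduced (ω.eraseIdx j) ∧
      π ω * cs.simple (ω.getD j d) = π (ω.eraseIdx j) := by
  have he := erase_tc cs d ω j hj htc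
  have h1 : ℓ (π (ω.eraseIdx j)) ≤ ω.length - 1 := by
    calc ℓ (π (ω.eraseIdx j)) ≤ (ω.eraseIdx j).length := cs.length_wordProd_le _
    _ = ω.length - 1 := by rw [List.length_eraseIdx_of_lt hj]
  have h2 : ℓ (π ω) = ω.length := hred
  have hdesc : cs.IsRightDescent (π ω) (ω.getD j d) := by
    unfold CoxeterSystem.IsRightDescent
    rw [he]
    omega
  refine ⟨hdesc, ?_, he⟩
  have h3 : ℓ (π ω * cs.simple (ω.getD j d)) + 1 = ℓ (π ω) :=
    (cs.isRightDescent_iff).mp hdesc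
  unfold CoxeterSystem.IsReduced
  rw [← he, List.length_eraseIdx_of_lt hj]
  omega

end RACGproof

end Part4

section Part5

namespace RACGproof

open List CoxeterSystem

variable {B : Type*} [Fintype B] {W : Type*} [Group W] {M : CoxeterMatrix B}
  (cs : CoxeterSystem M W)

local prefix:100 "ℓ" => cs.length
local prefix:100 "π" => cs.wordProd

/-- The defining set of `firmness`. -/
def firmSet (w : W) : Set ℕ :=
  {k | ∃ ω : List B, cs.IsReduced ω ∧ π ω = w ∧ k ≤ ω.length ∧
    (k = 0 ∨ cs.IsFirm (π (ω.take k)))}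

lemma firmness_eq_sSup (w : W) : cs.firmness w = sSup (firmSet cs w) := rfl

lemma zero_mem_firmSet (w : W) : 0 ∈ firmSet cs w := by
  obtain ⟨ω, hred, rfl⟩ := cs.exists_reduced_word' w
  exact ⟨ω, hred, rfl, Nat.zero_le _, Or.inl rfl⟩

lemma mem_firmSet_le {w : W} {k : ℕ} (h : k ∈ firmSet cs w) : k ≤ ℓ w := by
  obtain ⟨ω, hred, rfl, hk, _⟩ := h
  rw [hred]
  exact hk

lemma bddAbove_firmSet (w : W) : BddAbove (firmSet cs w) :=
  ⟨ℓ w, fun _ hk => mem_firmSet_le cs hk⟩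

lemma le_firmness {w : W} {k : ℕ} (h : k ∈ firmSet cs w) : k ≤ cs.firmness w :=
  le_csSup (bddAbove_firmSet cs w) h

lemma firmness_le {w : W} {n : ℕ} (h : ∀ k ∈ firmSet cs w, k ≤ n) :
    cs.firmness w ≤ n :=
  csSup_le ⟨0, zero_mem_firmSet cs w⟩ h

lemma length_le_firmness_of_firm {w : W} (h : cs.IsFirm w) : ℓ w ≤ cs.firmness w := by
  apply le_firmness
  obtain ⟨ω, hred, rfl⟩ := cs.exists_reduced_word' w
  refine ⟨ω, hred, rfl, le_of_eq hred, Or.inr ?_⟩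
  have : (ω.take (ℓ (π ω))).length = ω.length := by
    rw [hred]; simp
  rw [show ω.take (ℓ (π ω)) = ω from by rw [hred]; exact List.take_length]
  exact h

lemma firmness_mul_simple_le {w : W} {c : B} (hd : cs.IsRightDescent w c) :
    cs.firmness (w * cs.simple c) ≤ cs.firmness w := by
  apply firmness_le
  intro k hk
  apply le_firmness
  obtain ⟨ω, hred, hπ, hkl, hfirm⟩ := hk
  have hlw : ℓ (w * cs.simple c) + 1 = ℓ w := (cs.isRightDescent_iff).mp hd
  refine ⟨ω ++ [c], ?_, ?_, by simp; omega, ?_⟩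
  · unfold CoxeterSystem.IsReduced
    have : π (ω ++ [c]) = w := by
      rw [cs.wordProd_append, cs.wordProd_singleton, hπ,
        cs.simple_mul_simple_cancel_right]
    rw [this]
    have : ℓ (π ω) = ω.length := hred
    rw [hπ] at this
    simp
    omega
  · rw [cs.wordProd_append, cs.wordProd_singleton, hπ,
      cs.simple_mul_simple_cancel_right]
  · rcases hfirm with h0 | hf
    · exact Or.inl h0
    · right
      rwa [List.take_append_of_le_length hkl]

end RACGproof

end Part5

section Part6

namespace RACGproof

open List CoxeterSystem

variable {B : Type*} [Fintype B] {W : Type*} [Group W] {M : CoxeterMatrix B}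
  (cs : CoxeterSystem M W) (hra : CoxeterMatrix.IsRightAngled M)

local prefix:100 "ℓ" => cs.length
local prefix:100 "π" => cs.wordProd

/-- Position `j` is "tail-commuting" in `ω`. -/
def isTC (M : CoxeterMatrix B) (d : B) (ω : List B) (j : ℕ) : Prop :=
  j < ω.length ∧ ∀ i, i < ω.length → j < i → M (ω.getD j d) (ω.getD i d) = 2

/-- The covering relation of a chain in the heap of `ω`. -/
def chainRel (M : CoxeterMatrix B) (d : B) (ω : List B) (a b : ℕ) : Prop :=
  a < b ∧ M (ω.getD a d) (ω.getD b d) ≠ 2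

lemma chain'_length_le {R : ℕ → ℕ → Prop} {p : List ℕ} {n : ℕ}
    (hR : ∀ a b, R a b → a < b)
    (hmem : ∀ a ∈ p, a < n) (hch : List.Chain' R p) : p.length ≤ n := by
  have hlt : List.Chain' (· < ·) p := hch.imp hR
  have hpw : List.Pairwise (· < ·) p := List.isChain_iff_pairwise.mp hlt
  have hnd : p.Nodup := hpw.imp (fun h => Nat.ne_of_lt h)
  have hcard : p.toFinset.card = p.length := List.toFinset_card_of_nodup hnd
  have hsub : p.toFinset ⊆ Finset.range n := by
    intro a ha
    rw [List.mem_toFinset] at ha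
    exact Finset.mem_range.mpr (hmem a ha)
  have := Finset.card_le_card hsub
  rw [hcard, Finset.card_range] at this
  exact this

lemma chain'_last_or {α : Type*} {R : α → α → Prop} :
    ∀ p : List α, List.Chain' R p → ∀ a ∈ p, p.getLast? = some a ∨ ∃ b ∈ p, R a b := by
  intro p
  induction p with
  | nil => intro _ a ha; simp at ha
  | cons x l ih =>
    intro hch a ha
    cases l with
    | nil =>
      simp at ha
      subst ha
      left; simp
    | cons y l' =>
      simp only [List.Chain', List.isChain_cons_cons] at hch
      rcases List.mem_cons.mp ha with rfl | hal
      · exact Or.inr ⟨y, by simp, hch.1⟩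
      · rcases ih hch.2 a hal with h | ⟨b, hb, hR⟩
        · left; rw [List.getLast?_cons_cons]; exact h
        · exact Or.inr ⟨b, by simp [hb], hR⟩

lemma chain'_map_strong {R S : ℕ → ℕ → Prop} {f : ℕ → ℕ} :
    ∀ p : List ℕ, List.Chain' R p → (∀ a b, a ∈ p → b ∈ p → R a b → S (f a) (f b)) →
    List.Chain' S (p.map f) := by
  intro p
  induction p with
  | nil => intro _ _; exact List.isChain_nil
  | cons x l ih =>
    intro hch h
    cases l with
    | nil => exact List.isChain_singleton _
    | cons y l' =>
      simp only [List.Chain', List.isChain_cons_cons] at hch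
      simp only [List.map_cons]
      simp only [List.Chain', List.isChain_cons_cons]
      constructor
      · exact h x y (by simp) (by simp) hch.1
      · have := ih hch.2 (fun a b ha hb => h a b (by simp [ha]) (by simp [hb]))
        simpa [List.Chain'] using this

lemma getD_eraseIdx_lt {ω : List B} {j a : ℕ} (hj : j < ω.length) (ha : a < j) (d : B) :
    (ω.eraseIdx j).getD a d = ω.getD a d := by
  rw [List.eraseIdx_eq_take_drop_succ, List.getD_eq_getElem?_getD,
    List.getD_eq_getElem?_getD]
  rw [List.getElem?_append_left (by rw [List.length_take]; omega)]
  congr 1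
  rw [List.getElem?_take]
  simp [ha]

lemma getD_eraseIdx_gt {ω : List B} {j a : ℕ} (hj : j < ω.length) (hja : j < a)
    (ha : a < ω.length) (d : B) :
    (ω.eraseIdx j).getD (a - 1) d = ω.getD a d := by
  rw [List.eraseIdx_eq_take_drop_succ, List.getD_eq_getElem?_getD,
    List.getD_eq_getElem?_getD]
  have hlt : j < ω.length := hj
  have htl : (ω.take j).length = j := by rw [List.length_take]; omega
  rw [List.getElem?_append_right (by rw [List.length_take]; omega)]
  rw [List.getElem?_drop, htl]
  have hidx : j + 1 + (a - 1 - j) = a := by omega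
  rw [hidx]

include hra in
lemma chain_le_firmness (d : B) : ∀ n (ω : List B), ω.length = n → cs.IsReduced ω →
    ∀ p : List ℕ, (∀ a ∈ p, a < ω.length) → List.Chain' (chainRel M d ω) p →
    p.length ≤ cs.firmness (π ω) := by
  intro n
  induction n using Nat.strong_induction_on with
  | _ n ih =>
    intro ω hn hred p hmem hch
    rcases eq_or_ne p [] with rfl | hpne
    · simp
    by_cases hex : ∃ j, isTC M d ω j ∧ j ∉ p
    · obtain ⟨j, ⟨hj, htc⟩, hnp⟩ := hex
      obtain ⟨hdesc, hred', he⟩ := erase_tc_reduced cs hra d hred j hj htc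
      have hlen' : (ω.eraseIdx j).length = n - 1 := by
        rw [List.length_eraseIdx_of_lt hj]; omega
      have hjn : j < n := by omega
      have hmono : cs.firmness (π (ω.eraseIdx j)) ≤ cs.firmness (π ω) := by
        rw [← he]; exact firmness_mul_simple_le cs hdesc
      set f : ℕ → ℕ := fun a => if a < j then a else a - 1 with hf
      have hlabel : ∀ a, a < ω.length → a ≠ j → (ω.eraseIdx j).getD (f a) d = ω.getD a d := by
        intro a ha haj
        rcases Nat.lt_or_ge a j with h | h
        · have hfa : f a = a := by rw [hf]; exact if_pos h
          rw [hfa]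
          exact getD_eraseIdx_lt hj h d
        · have hgt : j < a := by omega
          have hfa : f a = a - 1 := by rw [hf]; exact if_neg (by omega)
          rw [hfa]
          exact getD_eraseIdx_gt hj hgt ha d
      have hstep : (p.map f).length ≤ cs.firmness (π (ω.eraseIdx j)) := by
        apply ih (n-1) (by omega) (ω.eraseIdx j) hlen' hred' (p.map f)
        · intro a' ha'
          obtain ⟨a, ha, rfl⟩ := List.mem_map.mp ha'
          have h1 : a < ω.length := hmem a ha
          have h2 : a ≠ j := fun h => hnp (h ▸ ha)
          rw [hlen']
          show (if a < j then a else a - 1) < n - 1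
          split <;> omega
        · apply chain'_map_strong p hch
          intro a b hap hbp hR
          have h1 : a < ω.length := hmem a hap
          have h2 : b < ω.length := hmem b hbp
          have h3 : a ≠ j := fun h => hnp (h ▸ hap)
          have h4 : b ≠ j := fun h => hnp (h ▸ hbp)
          obtain ⟨hab, hM⟩ := hR
          constructor
          · show (if a < j then a else a - 1) < (if b < j then b else b - 1)
            split <;> split <;> omega
          · rw [hlabel a h1 h3, hlabel b h2 h4]
            exact hM
      rw [List.length_map] at hstep
      omega
    · push_neg at hex
      have hωne : ω ≠ [] := by
        rintro rfl
        obtain ⟨a, ha⟩ := List.exists_mem_of_ne_nil p hpne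
        exact absurd (hmem a ha) (by simp)
      have hlpos : 0 < ω.length := List.length_pos_iff.mpr hωne
      have hTClast : isTC M d ω (ω.length - 1) :=
        ⟨by omega, fun i hi hji => by omega⟩
      have hlastmem := hex _ hTClast
      have hkey : ∀ a ∈ p, isTC M d ω a → p.getLast? = some a := by
        intro a ha htca
        rcases chain'_last_or p hch a ha with h | ⟨b, hb, hR⟩
        · exact h
        · exact absurd (htca.2 b (hmem b hb) hR.1) hR.2
      have huniq : ∀ j, isTC M d ω j → j = ω.length - 1 := by
        intro j htcj
        have h1 := hkey j (hex j htcj) htcj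
        have h2 := hkey _ hlastmem hTClast
        rw [h1] at h2
        exact Option.some.inj h2
      have hfirm : cs.IsFirm (π ω) := by
        obtain ⟨hdesc, _, _⟩ :=
          erase_tc_reduced cs hra d hred (ω.length - 1) (by omega) hTClast.2
        refine ⟨ω.getD (ω.length - 1) d, hdesc, ?_⟩
        intro r hr
        obtain ⟨j', hj', hlab, htail⟩ := descent_position cs hra d ω hred r hr
        have htcj' : isTC M d ω j' := by
          refine ⟨hj', fun i hi hji => ?_⟩
          rw [hlab]
          exact htail i hi hji
        rw [← hlab, huniq j' htcj']
      have hfin : p.length ≤ ω.length :=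
        chain'_length_le (fun a b h => h.1) hmem hch
      have hfge : ω.length ≤ cs.firmness (π ω) := by
        have h := length_le_firmness_of_firm cs hfirm
        rwa [hred] at h
      omega

end RACGproof

end Part6

section Part7

namespace RACGproof

open List CoxeterSystem

variable {B : Type*} [Fintype B] {W : Type*} [Group W] {M : CoxeterMatrix B}
  (cs : CoxeterSystem M W) (hra : CoxeterMatrix.IsRightAngled M)

local prefix:100 "ℓ" => cs.length
local prefix:100 "π" => cs.wordProd

include hra in
lemma length_le_firmness_mul (ω : List B) (hred : cs.IsReduced ω) :
    ω.length ≤ cs.firmness (π ω) * Fintype.card B := by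
  classical
  rcases eq_or_ne ω [] with rfl | hne
  · simp
  set d := ω.head hne with hd
  set K := cs.firmness (π ω) with hK
  set Hset : ℕ → Set ℕ := fun j => {k | ∃ p : List ℕ, p.getLast? = some j ∧
    (∀ a ∈ p, a < ω.length) ∧ List.Chain' (chainRel M d ω) p ∧ p.length = k} with hHset
  have h1 : ∀ j, j < ω.length → 1 ∈ Hset j := by
    intro j hj
    refine ⟨[j], by simp, ?_, List.isChain_singleton _, rfl⟩
    intro a ha
    simp at ha
    omega
  have hbdd : ∀ j, BddAbove (Hset j) := by
    intro j
    refine ⟨ω.length, fun k hk => ?_⟩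
    obtain ⟨p, _, hmem, hch, rfl⟩ := hk
    exact chain'_length_le (fun a b h => h.1) hmem hch
  set H : ℕ → ℕ := fun j => sSup (Hset j) with hH
  have hH1 : ∀ j, j < ω.length → 1 ≤ H j := fun j hj => le_csSup (hbdd j) (h1 j hj)
  have hHmem : ∀ j, j < ω.length → H j ∈ Hset j :=
    fun j hj => Nat.sSup_mem ⟨1, h1 j hj⟩ (hbdd j)
  have hHfirm : ∀ j, j < ω.length → H j ≤ K := by
    intro j hj
    obtain ⟨p, hlast, hmem, hch, hlen⟩ := hHmem j hj
    rw [← hlen]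
    exact chain_le_firmness cs hra d ω.length ω rfl hred p hmem hch
  have hstep : ∀ i j, i < j → j < ω.length → M (ω.getD i d) (ω.getD j d) ≠ 2 →
      H i + 1 ≤ H j := by
    intro i j hij hj hM
    have hi : i < ω.length := lt_trans hij hj
    obtain ⟨p, hlast, hmem, hch, hlen⟩ := hHmem i hi
    apply le_csSup (hbdd j)
    refine ⟨p ++ [j], by rw [List.getLast?_concat], ?_, ?_, by simp [hlen]⟩
    · intro a ha
      rcases List.mem_append.mp ha with h | h
      · exact hmem a h
      · simp at h; omega
    · simp only [List.Chain', List.isChain_append]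
      refine ⟨hch, by simp, ?_⟩
      intro x hx y hy
      rw [hlast] at hx
      simp at hx hy
      subst hx; subst hy
      exact ⟨hij, hM⟩
  have hkey : ∀ a b, a < b → b < ω.length → H a = H b → ω.getD a d = ω.getD b d → False := by
    intro a b hab hb hHeq hlab
    have hM : M (ω.getD a d) (ω.getD b d) ≠ 2 := by
      rw [hlab, M.diagonal]
      omega
    have := hstep a b hab hb hM
    omega
  have hinj : Set.InjOn (fun i => (H i, ω.getD i d)) ↑(Finset.range ω.length) := by
    intro i hi i' hi' heq
    simp only [Finset.coe_range, Set.mem_Iio] at hi hi'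
    simp only [Prod.mk.injEq] at heq
    by_contra hne'
    rcases Nat.lt_trichotomy i i' with h | h | h
    · exact hkey i i' h hi' heq.1 heq.2
    · exact hne' h
    · exact hkey i' i h hi heq.1.symm heq.2.symm
  have hmaps : ∀ i ∈ Finset.range ω.length,
      (H i, ω.getD i d) ∈ (Finset.Icc 1 K) ×ˢ (Finset.univ : Finset B) := by
    intro i hi
    rw [Finset.mem_range] at hi
    rw [Finset.mem_product, Finset.mem_Icc]
    exact ⟨⟨hH1 i hi, hHfirm i hi⟩, Finset.mem_univ _⟩
  have hcard := Finset.card_le_card_of_injOn _ hmaps hinj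
  rw [Finset.card_range, Finset.card_product, Nat.card_Icc, Finset.card_univ] at hcard
  have he : K + 1 - 1 = K := by omega
  rw [he] at hcard
  exact hcard

include hra in
theorem length_le_firmness_mul_card (w : W) :
    ℓ w ≤ cs.firmness w * Fintype.card B := by
  obtain ⟨ω, hred, rfl⟩ := cs.exists_reduced_word' w
  calc ℓ (π ω) = ω.length := hred
  _ ≤ cs.firmness (π ω) * Fintype.card B := length_le_firmness_mul cs hra ω hred

end RACGproof

end Part7


/-- The set of elements of firmness at most `n` is finite; more precisely, it is contained
in a ball of radius `d(n)` depending only on `n` and the Coxeter system. -/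
theorem finite_setOf_firmness_le {B W : Type*} [Group W] [Fintype B]
    {M : CoxeterMatrix B} (cs : CoxeterSystem M W) (hra : M.IsRightAngled) (n : ℕ) :
    {w : W | cs.firmness w ≤ n}.Finite ∧
      ∃ d : ℕ, {w : W | cs.firmness w ≤ n} ⊆ {w : W | cs.length w ≤ d} := by
  have hsub : {w : W | cs.firmness w ≤ n} ⊆ {w : W | cs.length w ≤ n * Fintype.card B} := by
    intro w hw
    simp only [Set.mem_setOf_eq] at hw ⊢
    calc cs.length w ≤ cs.firmness w * Fintype.card B :=
          RACGproof.length_le_firmness_mul_card cs hra w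
    _ ≤ n * Fintype.card B := Nat.mul_le_mul_right _ hw
  refine ⟨?_, n * Fintype.card B, hsub⟩
  apply Set.Finite.subset ?_ hsub
  apply Set.Finite.subset (Set.Finite.image cs.wordProd
    (List.finite_length_le B (n * Fintype.card B)))
  intro w hw
  simp only [Set.mem_setOf_eq] at hw
  obtain ⟨ω, hlen, hπ⟩ := cs.exists_reduced_word w
  exact ⟨ω, by simp only [Set.mem_setOf_eq]; have := hlen.eq; rw [← hπ] at this; omega, hπ.symm⟩
end

section
/- Let (W,S) be a right-angled Coxeter system and let n ∈ ℕ. Then {w ∈ W : F#(w) ≤ n} is the smallest subset of W containing the ball {w ∈ W : ℓ(w) ≤ n} and closed under squares; that is, {w : F#(w) ≤ n} contains the ball and is closed under squares, and every subset T ⊆ W that contains {w : ℓ(w) ≤ n} and is closed under squares contains {w : F#(w) ≤ n}. -/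
/-- A subset `T` of a right-angled Coxeter group is *closed under squares* if whenever
`w, ws, wt ∈ T` for distinct commuting generators `s, t` with `ℓ(ws) = ℓ(wt) = ℓ(w) + 1`,
also `wst ∈ T`. -/
def CoxeterSystem.ClosedUnderSquares {B W : Type*} [Group W] {M : CoxeterMatrix B}
    (cs : CoxeterSystem M W) (T : Set W) : Prop :=
  ∀ w ∈ T, ∀ s t : B, s ≠ t →
    cs.simple s * cs.simple t = cs.simple t * cs.simple s →
    cs.length (w * cs.simple s) = cs.length w + 1 →
    cs.length (w * cs.simple t) = cs.length w + 1 →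
    w * cs.simple s ∈ T → w * cs.simple t ∈ T →
    w * cs.simple s * cs.simple t ∈ T

namespace RAFirmAux
open List CoxeterSystem
open scoped Classical

variable {B W : Type*} [Group W] {M : CoxeterMatrix B} (cs : CoxeterSystem M W)

lemma exists_reduced_word_old (w : W) :
    ∃ ω : List B, ω.length = cs.length w ∧ w = cs.wordProd ω := by
  obtain ⟨ω, h, rfl⟩ := cs.exists_isReduced w
  exact ⟨ω, h.symm, rfl⟩

lemma conj_eq_iff {g t u : W} (hg : g * g = 1) : g * t * g = u ↔ t = g * u * g := by
  constructor
  · rintro rfl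
    have : g * (g * t * g) * g = (g * g) * t * (g * g) := by group
    rw [this, hg]; simp
  · rintro rfl
    have : g * (g * u * g) * g = (g * g) * u * (g * g) := by group
    rw [this, hg]; simp

lemma comm_of_M_eq_two {i j : B} (h : M i j = 2) :
    cs.simple i * cs.simple j = cs.simple j * cs.simple i := by
  have := cs.simple_mul_simple_pow i j
  rw [h, sq] at this
  have h2 : cs.simple i * cs.simple j = (cs.simple i * cs.simple j)⁻¹ :=
    eq_inv_of_mul_eq_one_left this
  rw [h2, mul_inv_rev, cs.inv_simple, cs.inv_simple]

noncomputable def sgnPermFun (i : B) : W × ℤˣ → W × ℤˣ :=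
  fun p => (cs.simple i * p.1 * cs.simple i,
    if p.1 = cs.simple i then -p.2 else p.2)

lemma sgnPermFun_invol (i : B) : Function.Involutive (sgnPermFun cs i) := by
  rintro ⟨t, e⟩
  have hsq := cs.simple_mul_simple_self i
  have hcond : cs.simple i * cs.simple i * cs.simple i = cs.simple i := by rw [hsq]; simp
  have hfst : cs.simple i * (cs.simple i * t * cs.simple i) * cs.simple i = t := by
    have : cs.simple i * (cs.simple i * t * cs.simple i) * cs.simple i
        = (cs.simple i * cs.simple i) * t * (cs.simple i * cs.simple i) := by group
    rw [this, hsq]; simp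
  unfold sgnPermFun
  simp only
  rw [Prod.ext_iff]
  refine ⟨hfst, ?_⟩
  simp only [show (cs.simple i * t * cs.simple i = cs.simple i) ↔ (t = cs.simple i) from by
    rw [conj_eq_iff hsq, hcond]]
  by_cases h : t = cs.simple i <;> simp [h]

noncomputable def sgnPerm (i : B) : Equiv.Perm (W × ℤˣ) := (sgnPermFun_invol cs i).toPerm

lemma sgnPerm_apply (i : B) (t : W) (e : ℤˣ) :
    sgnPerm cs i (t, e) = (cs.simple i * t * cs.simple i,
      if t = cs.simple i then -e else e) := rfl

lemma sgnPerm_sq (i : B) : sgnPerm cs i * sgnPerm cs i = 1 := by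
  ext p : 1
  exact (sgnPermFun_invol cs i) p

lemma sgnPerm_comm_sq {i j : B} (hc : cs.simple i * cs.simple j = cs.simple j * cs.simple i) :
    (sgnPerm cs i * sgnPerm cs j) ^ 2 = 1 := by
  set a := cs.simple i with ha
  set b := cs.simple j with hb
  have hasq : a * a = 1 := cs.simple_mul_simple_self i
  have hbsq : b * b = 1 := cs.simple_mul_simple_self j
  have h1 : b * a * b = a := by
    rw [← hc, mul_assoc, hbsq, mul_one]
  have h2 : a * b * a = b := by
    rw [hc, mul_assoc, hasq, mul_one]
  rw [sq]
  apply Equiv.ext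
  rintro ⟨t, e⟩
  have c2 : (b * t * b = a) ↔ (t = a) := by
    rw [conj_eq_iff hbsq, h1]
  have c3 : (a * (b * t * b) * a = b) ↔ (t = b) := by
    rw [conj_eq_iff hasq, conj_eq_iff hbsq]
    have : b * (a * b * a) * b = b := by rw [h2, hbsq]; simp
    rw [this]
  have c4 : (b * (a * (b * t * b) * a) * b = a) ↔ (t = a) := by
    rw [conj_eq_iff hbsq, conj_eq_iff hasq, conj_eq_iff hbsq]
    have : b * (a * (b * a * b) * a) * b = a := by
      rw [h1, hasq]; simp only [one_mul]; exact h1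
    rw [this]
  have coord : a * (b * (a * (b * t * b) * a) * b) * a = t := by
    have habab : a * b * (a * b) = 1 := by
      rw [show a * b * (a * b) = (a * b * a) * b by group, h2, hbsq]
    have : a * (b * (a * (b * t * b) * a) * b) * a
        = (a * b * (a * b)) * t * ((b * a) * (b * a)) := by group
    rw [this, habab, show (b * a) * (b * a) = (b * a * b) * a by group, h1, hasq]
    simp
  simp only [Equiv.Perm.mul_apply, sgnPerm_apply, ← ha, ← hb, Equiv.Perm.one_apply]
  rw [Prod.ext_iff]
  simp only [c2, c3, c4, coord]
  refine ⟨by trivial, ?_⟩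
  by_cases h1t : t = b <;> by_cases h2t : t = a
  · have hba : b = a := by rw [← h1t, h2t]
    simp [h1t, h2t, hba]
  · have hba : b ≠ a := fun h => h2t (h1t.trans h)
    simp [h1t, h2t, hba]
  · have hab : a ≠ b := fun h => h1t (h2t.trans h)
    simp [h1t, h2t, hab]
  · simp [h1t, h2t]


lemma conj_eq_iff' (x t u : W) : x * t * x⁻¹ = u ↔ t = x⁻¹ * u * x := by
  constructor
  · rintro rfl; group
  · rintro rfl; group

lemma sgnPerm_liftable (hra : M.IsRightAngled) : M.IsLiftable (fun i => sgnPerm cs i) := by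
  intro i j
  by_cases hij : i = j
  · subst hij
    rw [M.diagonal, pow_one, sgnPerm_sq]
  · rcases hra i j hij with h2 | h0
    · rw [h2]
      exact sgnPerm_comm_sq cs (comm_of_M_eq_two cs h2)
    · rw [h0, pow_zero]

noncomputable def sgnRep (hra : M.IsRightAngled) : W →* Equiv.Perm (W × ℤˣ) :=
  cs.lift ⟨fun i => sgnPerm cs i, sgnPerm_liftable cs hra⟩

lemma sgnRep_simple (hra : M.IsRightAngled) (i : B) : sgnRep cs hra (cs.simple i) = sgnPerm cs i :=
  CoxeterSystem.lift_apply_simple cs (sgnPerm_liftable cs hra) i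

lemma sgnRep_wordProd (hra : M.IsRightAngled) (ω : List B) (t : W) (e : ℤˣ) :
    sgnRep cs hra (cs.wordProd ω) (t, e) =
      (cs.wordProd ω * t * (cs.wordProd ω)⁻¹,
        if Even ((cs.rightInvSeq ω).count t) then e else -e) := by
  induction ω with
  | nil => simp [wordProd_nil, map_one]
  | cons i ω ih =>
    rw [wordProd_cons, map_mul, Equiv.Perm.mul_apply, ih, sgnRep_simple cs hra, sgnPerm_apply]
    have hfst : cs.simple i * (cs.wordProd ω * t * (cs.wordProd ω)⁻¹) * cs.simple i
        = cs.wordProd (i :: ω) * t * (cs.wordProd (i :: ω))⁻¹ := by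
      rw [wordProd_cons, mul_inv_rev, cs.inv_simple]
      group
    have hcond : (cs.wordProd ω * t * (cs.wordProd ω)⁻¹ = cs.simple i)
        ↔ (t = (cs.wordProd ω)⁻¹ * cs.simple i * cs.wordProd ω) := conj_eq_iff' _ _ _
    have hcount : (cs.rightInvSeq (i :: ω)).count t
        = (cs.rightInvSeq ω).count t
          + (if t = (cs.wordProd ω)⁻¹ * cs.simple i * cs.wordProd ω then 1 else 0) := by
      show ((((cs.wordProd ω)⁻¹ * cs.simple i * cs.wordProd ω)) :: cs.rightInvSeq ω).count t
        = _
      rw [List.count_cons]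
      congr 1
      by_cases h : t = (cs.wordProd ω)⁻¹ * cs.simple i * cs.wordProd ω
      · simp [h]
      · have h' : ¬ ((cs.wordProd ω)⁻¹ * cs.simple i * cs.wordProd ω = t) :=
          fun hh => h hh.symm
        simp [beq_iff_eq, h, h']
    rw [Prod.ext_iff]
    refine ⟨hfst, ?_⟩
    simp only [hcond, hcount]
    by_cases h : t = (cs.wordProd ω)⁻¹ * cs.simple i * cs.wordProd ω
    · rw [if_pos h, if_pos h]
      simp only [Nat.even_add_one]
      by_cases he : Even (List.count t (cs.rightInvSeq ω))
      · rw [if_pos he, if_neg (not_not_intro he)]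
      · rw [if_neg he, if_pos he, neg_neg]
    · rw [if_neg h, if_neg h, add_zero]

lemma count_ris_even_iff (hra : M.IsRightAngled) {ω ω' : List B} (h : cs.wordProd ω = cs.wordProd ω') (t : W) :
    (Even ((cs.rightInvSeq ω).count t) ↔ Even ((cs.rightInvSeq ω').count t)) := by
  have h1 := sgnRep_wordProd cs hra ω t 1
  have h2 := sgnRep_wordProd cs hra ω' t 1
  rw [h] at h1
  have h3 := (h1.symm.trans h2)
  have h4 := congrArg Prod.snd h3
  simp only at h4
  by_cases e1 : Even ((cs.rightInvSeq ω).count t) <;>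
    by_cases e2 : Even ((cs.rightInvSeq ω').count t) <;>
    simp [e1, e2] at h4 ⊢

lemma lis_getD_conj (ω : List B) (idx : ℕ) (h : idx < ω.length) :
    (cs.leftInvSeq ω).getD idx 1
      = cs.wordProd ω * ((cs.rightInvSeq ω).getD idx 1) * (cs.wordProd ω)⁻¹ := by
  rw [cs.getD_leftInvSeq, cs.getD_rightInvSeq]
  have hdrop : ω.drop idx = ω[idx] :: ω.drop (idx + 1) := List.drop_eq_getElem_cons h
  have hsplit : cs.wordProd ω
      = cs.wordProd (ω.take idx) * (cs.simple ω[idx] * cs.wordProd (ω.drop (idx + 1))) := by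
    nth_rw 1 [← List.take_append_drop idx ω]
    rw [wordProd_append, hdrop, wordProd_cons]
  have hget : ω[idx]? = some ω[idx] := by
    rw [List.getElem?_eq_getElem h]
  rw [hget, hsplit]
  simp only [Option.map_some, Option.getD_some]
  group

lemma exists_exchange (hra : M.IsRightAngled) {ω : List B} (hred : cs.IsReduced ω) {j : B}
    (h : cs.length (cs.wordProd ω * cs.simple j) < cs.length (cs.wordProd ω)) :
    ∃ idx, idx < ω.length ∧ cs.wordProd (ω.eraseIdx idx) = cs.wordProd ω * cs.simple j ∧
      (cs.leftInvSeq ω).getD idx 1 = cs.wordProd ω * cs.simple j * (cs.wordProd ω)⁻¹ := by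
  have hlen : cs.length (cs.wordProd ω * cs.simple j) + 1 = cs.length (cs.wordProd ω) := by
    rcases cs.length_mul_simple (cs.wordProd ω) j with h' | h' <;> omega
  obtain ⟨τ, hτlen, hτeq⟩ := exists_reduced_word_old cs (cs.wordProd ω * cs.simple j)
  have hπ : cs.wordProd (τ ++ [j]) = cs.wordProd ω := by
    rw [wordProd_append, wordProd_singleton, ← hτeq, cs.simple_mul_simple_cancel_right]
  have hω'red : cs.IsReduced (τ ++ [j]) := by
    show cs.length _ = _
    rw [hπ, List.length_append, List.length_singleton, hτlen]
    omega
  have hmem : cs.simple j ∈ cs.rightInvSeq (τ ++ [j]) := by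
    rw [← List.concat_eq_append, cs.rightInvSeq_concat]
    simp
  have hcount1 : (cs.rightInvSeq (τ ++ [j])).count (cs.simple j) = 1 :=
    List.count_eq_one_of_mem (hω'red.nodup_rightInvSeq) hmem
  have hodd : ¬ Even ((cs.rightInvSeq ω).count (cs.simple j)) := by
    rw [count_ris_even_iff cs hra hπ.symm  (cs.simple j), hcount1]
    decide
  have hmem' : cs.simple j ∈ cs.rightInvSeq ω := by
    by_contra hc
    rw [List.count_eq_zero_of_not_mem hc] at hodd
    exact hodd (Even.zero)
  obtain ⟨idx, hidx, hval⟩ := List.mem_iff_getElem.mp hmem'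
  have hidx' : idx < ω.length := by
    rwa [cs.length_rightInvSeq] at hidx
  have hgetD : (cs.rightInvSeq ω).getD idx 1 = cs.simple j := by
    rw [List.getD_eq_getElem _ _ hidx, hval]
  refine ⟨idx, hidx', ?_, ?_⟩
  · rw [← cs.wordProd_mul_getD_rightInvSeq, hgetD]
  · rw [lis_getD_conj cs ω idx hidx', hgetD]


/-! ### Injectivity of simple reflections (right-angled case) -/

lemma mul_self_zmod2 : ∀ v : Multiplicative (ZMod 2), v * v = 1 := by decide

noncomputable def abFun : B → (B → Multiplicative (ZMod 2)) :=
  fun i b => if b = i then Multiplicative.ofAdd (1 : ZMod 2) else 1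

lemma ab_liftable (hra : M.IsRightAngled) : M.IsLiftable (abFun (B := B)) := by
  intro a b
  by_cases hab : a = b
  · subst hab
    rw [M.diagonal, pow_one]
    funext x
    exact mul_self_zmod2 _
  · rcases hra a b hab with h2 | h0
    · rw [h2, sq]
      funext x
      exact mul_self_zmod2 _
    · rw [h0, pow_zero]

lemma simple_ne (hra : M.IsRightAngled) {i j : B} (hij : i ≠ j) :
    cs.simple i ≠ cs.simple j := by
  intro h
  have h1 := cs.lift_apply_simple (ab_liftable (M := M) hra) i
  have h2 := cs.lift_apply_simple (ab_liftable (M := M) hra) j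
  rw [h, h2] at h1
  have h3 := congrFun h1 i
  unfold abFun at h3
  rw [if_pos rfl, if_neg hij] at h3
  exact absurd h3 (by decide)

/-! ### The infinite dihedral representation -/

noncomputable def dR0 : Equiv.Perm ℤ :=
  Function.Involutive.toPerm (fun x => -x) (fun x => by ring)

noncomputable def dR1 : Equiv.Perm ℤ :=
  Function.Involutive.toPerm (fun x => 1 - x) (fun x => by ring)

lemma dR0_apply (x : ℤ) : dR0 x = -x := rfl
lemma dR1_apply (x : ℤ) : dR1 x = 1 - x := rfl

lemma dR0_sq : dR0 * dR0 = 1 := by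
  apply Equiv.ext; intro x
  show dR0 (dR0 x) = x
  rw [dR0_apply, dR0_apply, neg_neg]

lemma dR1_sq : dR1 * dR1 = 1 := by
  apply Equiv.ext; intro x
  show dR1 (dR1 x) = x
  rw [dR1_apply, dR1_apply]
  ring

noncomputable def dF (g : Equiv.Perm ℤ) : ℕ := min (2 * (g 0).natAbs) (2 * (g 0) - 1).natAbs

lemma dF_one : dF 1 = 0 := by
  show min (2 * (0:ℤ).natAbs) (2 * (0:ℤ) - 1).natAbs = 0
  norm_num

lemma dF_r0 (g : Equiv.Perm ℤ) : dF (dR0 * g) ≤ dF g + 1 := by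
  have h : (dR0 * g) 0 = -(g 0) := rfl
  unfold dF
  rw [h]
  omega

lemma dF_r1 (g : Equiv.Perm ℤ) : dF (dR1 * g) ≤ dF g + 1 := by
  have h : (dR1 * g) 0 = 1 - (g 0) := rfl
  unfold dF
  rw [h]
  omega

noncomputable def dinfFun (i j : B) : B → Equiv.Perm ℤ :=
  fun b => if b = i then dR0 else if b = j then dR1 else 1

lemma dinfFun_sq (i j : B) (b : B) : dinfFun i j b * dinfFun i j b = 1 := by
  unfold dinfFun
  by_cases hbi : b = i
  · rw [if_pos hbi, dR0_sq]
  · rw [if_neg hbi]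
    by_cases hbj : b = j
    · rw [if_pos hbj, dR1_sq]
    · rw [if_neg hbj, one_mul]

lemma dinf_liftable (hra : M.IsRightAngled) {i j : B} (hij : i ≠ j) (h0 : M i j = 0) :
    M.IsLiftable (dinfFun (B := B) i j) := by
  intro a b
  by_cases hab : a = b
  · subst hab
    rw [M.diagonal, pow_one]
    exact dinfFun_sq i j a
  · rcases hra a b hab with h2 | hz
    · have key : dinfFun i j a = 1 ∨ dinfFun i j b = 1 := by
        by_cases hai : a = i
        · right
          have hbi : b ≠ i := fun h => hab (hai.trans h.symm)
          have hbj : b ≠ j := by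
            intro h
            rw [hai, h, h0] at h2
            exact absurd h2 (by norm_num)
          unfold dinfFun
          rw [if_neg hbi, if_neg hbj]
        · by_cases haj : a = j
          · right
            have hbj : b ≠ j := fun h => hab (haj.trans h.symm)
            have hbi : b ≠ i := by
              intro h
              rw [haj, h, M.symmetric, h0] at h2
              exact absurd h2 (by norm_num)
            unfold dinfFun
            rw [if_neg hbi, if_neg hbj]
          · left
            unfold dinfFun
            rw [if_neg hai, if_neg haj]
      rw [h2, sq]
      rcases key with hk | hk
      · rw [hk, one_mul]
        exact dinfFun_sq i j b
      · rw [hk, mul_one]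
        exact dinfFun_sq i j a
    · rw [hz, pow_zero]

lemma dinf_lower {i j : B} (hl : M.IsLiftable (dinfFun (B := B) i j))
    (ω : List B) :
    dF (cs.lift ⟨dinfFun i j, hl⟩ (cs.wordProd ω)) ≤ ω.length := by
  induction ω with
  | nil =>
    rw [wordProd_nil, map_one, dF_one]
    exact Nat.zero_le _
  | cons a ω ih =>
    rw [wordProd_cons, map_mul, cs.lift_apply_simple]
    have step : ∀ g : Equiv.Perm ℤ, dF (dinfFun i j a * g) ≤ dF g + 1 := by
      intro g
      unfold dinfFun
      by_cases hai : a = i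
      · rw [if_pos hai]; exact dF_r0 g
      · rw [if_neg hai]
        by_cases haj : a = j
        · rw [if_pos haj]; exact dF_r1 g
        · rw [if_neg haj, one_mul]; exact Nat.le_succ_of_le le_rfl
    calc dF (dinfFun i j a * cs.lift ⟨dinfFun i j, hl⟩ (cs.wordProd ω))
        ≤ dF (cs.lift ⟨dinfFun i j, hl⟩ (cs.wordProd ω)) + 1 := step _
      _ ≤ ω.length + 1 := Nat.add_le_add_right ih 1
      _ = (a :: ω).length := by simp

lemma dinf_alt_val {i j : B} (hl : M.IsLiftable (dinfFun (B := B) i j)) (hij : i ≠ j) :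
    ∀ k : ℕ,
      cs.lift ⟨dinfFun i j, hl⟩ (cs.wordProd (alternatingWord i j (2*k))) 0 = -(k:ℤ) ∧
      cs.lift ⟨dinfFun i j, hl⟩ (cs.wordProd (alternatingWord i j (2*k+1))) 0 = (k:ℤ)+1 := by
  have hfi : dinfFun (B := B) i j i = dR0 := by unfold dinfFun; rw [if_pos rfl]
  have hfj : dinfFun (B := B) i j j = dR1 := by
    unfold dinfFun; rw [if_neg (Ne.symm hij), if_pos rfl]
  have halt0 : alternatingWord i j 0 = [] := rfl
  intro k
  induction k with
  | zero =>
    constructor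
    · norm_num
      rw [halt0, wordProd_nil, map_one]
      rfl
    · norm_num
      rw [show (1:ℕ) = 0 + 1 from rfl, alternatingWord_succ' i j 0]
      simp only [Even.zero, if_true]
      rw [halt0, wordProd_cons, wordProd_nil, mul_one, cs.lift_apply_simple, hfj]
      rfl
  | succ k ih =>
    obtain ⟨ih1, ih2⟩ := ih
    have e1 : 2*(k+1) = (2*k+1) + 1 := by ring
    have heven : ¬ Even (2*k+1) := by simp [Nat.even_add_one]
    have v1 : cs.lift ⟨dinfFun i j, hl⟩
        (cs.wordProd (alternatingWord i j (2*(k+1)))) 0 = -((k:ℤ)+1) := by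
      rw [e1, alternatingWord_succ' i j (2*k+1), if_neg heven, wordProd_cons, map_mul,
        cs.lift_apply_simple, hfi, Equiv.Perm.mul_apply, ih2, dR0_apply]
    constructor
    · rw [v1]; push_cast; ring
    · have heven2 : Even (2*(k+1)) := even_two_mul _
      rw [show 2*(k+1)+1 = (2*(k+1)) + 1 from rfl, alternatingWord_succ' i j (2*(k+1)),
        if_pos heven2, wordProd_cons, map_mul, cs.lift_apply_simple, hfj,
        Equiv.Perm.mul_apply, v1, dR1_apply]
      push_cast; ring

lemma alt_length_ge (hra : M.IsRightAngled) {i j : B} (hij : i ≠ j) (h0 : M i j = 0)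
    (m : ℕ) : m ≤ cs.length (cs.wordProd (alternatingWord i j m)) := by
  have hl : M.IsLiftable (dinfFun (B := B) i j) := dinf_liftable (M := M) hra hij h0
  have hval : dF (cs.lift ⟨dinfFun i j, hl⟩ (cs.wordProd (alternatingWord i j m))) = m := by
    rcases Nat.even_or_odd m with he | ho
    · obtain ⟨k, hk⟩ := he
      have hm : m = 2*k := by omega
      subst hm
      have hv := (dinf_alt_val cs hl hij k).1
      unfold dF
      rw [hv]
      omega
    · obtain ⟨k, hk⟩ := ho
      subst hk
      have hv := (dinf_alt_val cs hl hij k).2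
      unfold dF
      rw [hv]
      omega
  obtain ⟨ω, hωlen, hωeq⟩ := exists_reduced_word_old cs (cs.wordProd (alternatingWord i j m))
  calc m = dF (cs.lift ⟨dinfFun i j, hl⟩ (cs.wordProd (alternatingWord i j m))) := hval.symm
    _ = dF (cs.lift ⟨dinfFun i j, hl⟩ (cs.wordProd ω)) := by rw [← hωeq]
    _ ≤ ω.length := dinf_lower cs hl ω
    _ = _ := hωlen

/-! ### Distinct right descents commute -/

lemma descents_commute (hra : M.IsRightAngled) {z : W} {i j : B} (hij : i ≠ j)
    (hdi : cs.IsRightDescent z i) (hdj : cs.IsRightDescent z j) :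
    cs.simple i * cs.simple j = cs.simple j * cs.simple i := by
  rcases hra i j hij with h2 | h0
  · exact comm_of_M_eq_two cs h2
  exfalso
  -- the set of k such that z has a reduced word ending with an alternating word of length k
  set S : Set ℕ := {k | ∃ ρ : List B,
    (cs.IsReduced (ρ ++ alternatingWord i j k) ∧ cs.wordProd (ρ ++ alternatingWord i j k) = z) ∨
    (cs.IsReduced (ρ ++ alternatingWord j i k) ∧ cs.wordProd (ρ ++ alternatingWord j i k) = z)}
    with hS
  have hbdd : BddAbove S := by
    refine ⟨cs.length z, ?_⟩
    rintro k ⟨ρ, hk⟩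
    have key : ∀ (a b : B), cs.IsReduced (ρ ++ alternatingWord a b k) →
        cs.wordProd (ρ ++ alternatingWord a b k) = z → k ≤ cs.length z := by
      intro a b hred hπ
      have h1 : (ρ ++ alternatingWord a b k).length = cs.length z := by
        rw [← hπ]; exact hred.symm
      rw [List.length_append, length_alternatingWord] at h1
      omega
    rcases hk with ⟨hred, hπ⟩ | ⟨hred, hπ⟩
    · exact key i j hred hπ
    · exact key j i hred hπ
  have h1S : 1 ∈ S := by
    obtain ⟨τ, hτlen, hτeq⟩ := exists_reduced_word_old cs (z * cs.simple j)
    refine ⟨τ, Or.inl ⟨?_, ?_⟩⟩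
    · show cs.length (cs.wordProd (τ ++ alternatingWord i j 1)) = _
      have : alternatingWord i j 1 = [j] := by
        rw [show (1:ℕ) = 0+1 from rfl, alternatingWord_succ' i j 0]
        simp [show alternatingWord i j 0 = [] from rfl]
      rw [this, wordProd_append, wordProd_singleton, ← hτeq,
        cs.simple_mul_simple_cancel_right, List.length_append, List.length_singleton, hτlen]
      have := cs.length_mul_simple z j
      unfold CoxeterSystem.IsRightDescent at hdj
      omega
    · have : alternatingWord i j 1 = [j] := by
        rw [show (1:ℕ) = 0+1 from rfl, alternatingWord_succ' i j 0]
        simp [show alternatingWord i j 0 = [] from rfl]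
      rw [this, wordProd_append, wordProd_singleton, ← hτeq,
        cs.simple_mul_simple_cancel_right]
  have hne : S.Nonempty := ⟨1, h1S⟩
  set k := sSup S with hk
  have hkS : k ∈ S := Nat.sSup_mem hne hbdd
  -- generic step
  have step : ∀ a b : B, a ≠ b → M a b = 0 → cs.IsRightDescent z a → cs.IsRightDescent z b →
      ∀ ρ : List B, cs.IsReduced (ρ ++ alternatingWord a b k) →
      cs.wordProd (ρ ++ alternatingWord a b k) = z →
      ∃ ρ' : List B, cs.IsReduced (ρ' ++ alternatingWord b a (k+1)) ∧
        cs.wordProd (ρ' ++ alternatingWord b a (k+1)) = z := by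
    intro a b hab h0' hda hdb ρ hred hπ
    have hda' : cs.length (cs.wordProd (ρ ++ alternatingWord a b k) * cs.simple a)
        < cs.length (cs.wordProd (ρ ++ alternatingWord a b k)) := by rw [hπ]; exact hda
    obtain ⟨idx, hidx, herase, -⟩ := exists_exchange cs hra hred hda'
    have hlen_za : cs.length (z * cs.simple a) + 1 = cs.length z := by
      have := cs.length_mul_simple z a
      unfold CoxeterSystem.IsRightDescent at hda
      omega
    have hωlen : (ρ ++ alternatingWord a b k).length = cs.length z := by
      rw [← hπ]; exact hred.symm
    by_cases hcase : idx < ρ.length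
    · -- erase inside ρ
      have hπ' : cs.wordProd (ρ.eraseIdx idx ++ alternatingWord b a (k+1)) = z := by
        rw [alternatingWord_succ b a k, List.concat_eq_append, ← List.append_assoc,
          wordProd_append, wordProd_singleton,
          ← List.eraseIdx_append_of_lt_length hcase, herase, hπ,
          cs.simple_mul_simple_cancel_right]
      have hlen' : (ρ.eraseIdx idx ++ alternatingWord b a (k+1)).length = cs.length z := by
        rw [List.length_append, length_alternatingWord]
        have h5 := List.length_eraseIdx_add_one hcase
        rw [List.length_append, length_alternatingWord] at hωlen
        omega
      refine ⟨ρ.eraseIdx idx, ?_, hπ'⟩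
      show cs.length (cs.wordProd (ρ.eraseIdx idx ++ alternatingWord b a (k+1)))
        = (ρ.eraseIdx idx ++ alternatingWord b a (k+1)).length
      rw [hπ', hlen']
    · -- erase inside the alternating word: contradiction
      exfalso
      push_neg at hcase
      have herase2 : (ρ ++ alternatingWord a b k).eraseIdx idx
          = ρ ++ (alternatingWord a b k).eraseIdx (idx - ρ.length) :=
        List.eraseIdx_append_of_length_le hcase _
      have hπρ : cs.wordProd ρ * cs.wordProd (alternatingWord a b k) = z := by
        rw [← wordProd_append]; exact hπ
      have hval : cs.wordProd ((alternatingWord a b k).eraseIdx (idx - ρ.length))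
          = cs.wordProd (alternatingWord b a (k+1)) := by
        have e1 : cs.wordProd ρ * cs.wordProd ((alternatingWord a b k).eraseIdx (idx - ρ.length))
            = z * cs.simple a := by
          rw [← wordProd_append, ← herase2, herase, hπ]
        have e2 : cs.wordProd (alternatingWord b a (k+1))
            = cs.wordProd (alternatingWord a b k) * cs.simple a := by
          rw [alternatingWord_succ b a k, List.concat_eq_append, wordProd_append,
            wordProd_singleton]
        rw [e2]
        have := congrArg (fun x => (cs.wordProd ρ)⁻¹ * x) e1
        simp only [← mul_assoc, inv_mul_cancel, one_mul] at this
        rw [this, ← hπρ]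
        group
      have hlb := alt_length_ge cs hra (Ne.symm hab) (by rw [M.symmetric]; exact h0') (k+1)
      rw [← hval] at hlb
      have hub := cs.length_wordProd_le ((alternatingWord a b k).eraseIdx (idx - ρ.length))
      have hidx2 : idx - ρ.length < (alternatingWord a b k).length := by
        rw [List.length_append] at hidx
        omega
      have := List.length_eraseIdx_add_one hidx2
      rw [length_alternatingWord] at hidx2 this
      omega
  -- apply the step to the flavor provided by hkS
  obtain ⟨ρ, hflav⟩ := hkS
  have hk1 : k + 1 ∈ S := by
    rcases hflav with ⟨hred, hπ⟩ | ⟨hred, hπ⟩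
    · obtain ⟨ρ', h1, h2⟩ := step i j hij h0 hdi hdj ρ hred hπ
      exact ⟨ρ', Or.inr ⟨h1, h2⟩⟩
    · obtain ⟨ρ', h1, h2⟩ := step j i (Ne.symm hij) (by rw [M.symmetric]; exact h0) hdj hdi ρ hred hπ
      exact ⟨ρ', Or.inl ⟨h1, h2⟩⟩
  have : k + 1 ≤ k := le_csSup hbdd hk1
  omega


lemma descent_succ {z : W} {i : B} (h : cs.IsRightDescent z i) :
    cs.length (z * cs.simple i) + 1 = cs.length z := by
  rcases cs.length_mul_simple z i with h' | h' <;> unfold CoxeterSystem.IsRightDescent at h <;>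
    omega

lemma D2 (hra : M.IsRightAngled) {z : W} {i j : B} (hij : i ≠ j)
    (hdi : cs.IsRightDescent z i) (hdj : cs.IsRightDescent z j) :
    cs.length (z * cs.simple j * cs.simple i) + 2 = cs.length z := by
  obtain ⟨τ, hτlen, hτeq⟩ := exists_reduced_word_old cs (z * cs.simple i)
  have hzi := descent_succ cs hdi
  have hzj := descent_succ cs hdj
  have hω : cs.wordProd (τ ++ [i]) = z := by
    rw [wordProd_append, wordProd_singleton, ← hτeq, cs.simple_mul_simple_cancel_right]
  have hred : cs.IsReduced (τ ++ [i]) := by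
    show cs.length _ = _
    rw [hω, List.length_append, List.length_singleton, hτlen]
    omega
  have hdj' : cs.length (cs.wordProd (τ ++ [i]) * cs.simple j)
      < cs.length (cs.wordProd (τ ++ [i])) := by rw [hω]; exact hdj
  obtain ⟨idx, hidx, herase, -⟩ := exists_exchange cs hra hred hdj'
  rw [hω] at herase
  by_cases hc : idx < τ.length
  · have he : (τ ++ [i]).eraseIdx idx = τ.eraseIdx idx ++ [i] :=
      List.eraseIdx_append_of_lt_length hc _
    have h1 : z * cs.simple j * cs.simple i = cs.wordProd (τ.eraseIdx idx) := by
      rw [← herase, he, wordProd_append, wordProd_singleton,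
        cs.simple_mul_simple_cancel_right]
    have h2 : cs.length (z * cs.simple j * cs.simple i) ≤ (τ.eraseIdx idx).length := by
      rw [h1]; exact cs.length_wordProd_le _
    have h3 := List.length_eraseIdx_add_one hc
    have h4 := cs.length_mul_simple (z * cs.simple j) i
    omega
  · exfalso
    push_neg at hc
    have hidx' : idx = τ.length := by
      rw [List.length_append, List.length_singleton] at hidx
      omega
    have he : (τ ++ [i]).eraseIdx idx = τ := by
      rw [List.eraseIdx_append_of_length_le (by omega), hidx']
      simp
    rw [he, ← hτeq] at herase
    have : cs.simple i = cs.simple j := mul_left_cancel herase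
    exact simple_ne cs hra hij this

/-- Key dichotomy: if `u ≤ v` in weak order and `t` is a right descent of `v`,
then either `u ≤ vt`, or the reflection `v t v⁻¹` is a left inversion of `u`. -/
lemma prefix_or_inversion {u v : W} {t : B}
    (hadd : cs.length u + cs.length (u⁻¹ * v) = cs.length v)
    (hra : M.IsRightAngled)
    (hvt : cs.length (v * cs.simple t) < cs.length v) :
    (cs.length u + cs.length (u⁻¹ * (v * cs.simple t)) = cs.length (v * cs.simple t)) ∨
      cs.length (v * cs.simple t * v⁻¹ * u) < cs.length u := by
  obtain ⟨α, hαlen, hαeq⟩ := exists_reduced_word_old cs u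
  obtain ⟨β, hβlen, hβeq⟩ := exists_reduced_word_old cs (u⁻¹ * v)
  have hπω : cs.wordProd (α ++ β) = v := by
    rw [wordProd_append, ← hαeq, ← hβeq, mul_inv_cancel_left]
  have hredω : cs.IsReduced (α ++ β) := by
    show cs.length _ = _
    rw [hπω, List.length_append, hαlen, hβlen]
    omega
  have hvt' : cs.length (cs.wordProd (α ++ β) * cs.simple t)
      < cs.length (cs.wordProd (α ++ β)) := by rw [hπω]; exact hvt
  obtain ⟨idx, hidx, herase, hlis⟩ := exists_exchange cs hra hredω hvt'
  rw [hπω] at herase hlis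
  by_cases hc : idx < α.length
  · right
    have hαred : cs.IsReduced α := by
      show cs.length _ = _
      rw [← hαeq, hαlen]
    have htake : (α ++ β).take α.length = α := List.take_left
    have hlis_take : cs.leftInvSeq α = (cs.leftInvSeq (α ++ β)).take α.length := by
      rw [← cs.leftInvSeq_take (α ++ β) α.length, htake]
    have hlen_lis : idx < (cs.leftInvSeq α).length := by
      rw [cs.length_leftInvSeq]; exact hc
    have hgetlis : (cs.leftInvSeq α).getD idx 1 = (cs.leftInvSeq (α ++ β)).getD idx 1 := by
      rw [hlis_take]
      rw [List.getD_eq_getElem _ _ (by rwa [hlis_take] at hlen_lis),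
        List.getD_eq_getElem _ _ (by
          rw [cs.length_leftInvSeq, List.length_append]; omega)]
      rw [List.getElem_take]
    have hmem : v * cs.simple t * v⁻¹ ∈ cs.leftInvSeq α := by
      rw [← hlis, ← hgetlis, List.getD_eq_getElem _ _ hlen_lis]
      exact List.getElem_mem _
    have hinv := cs.isLeftInversion_of_mem_leftInvSeq hαred hmem
    have := hinv.2
    rwa [← hαeq] at this
  · left
    push_neg at hc
    have he : (α ++ β).eraseIdx idx = α ++ β.eraseIdx (idx - α.length) :=
      List.eraseIdx_append_of_length_le hc _
    have hπ' : cs.wordProd α * cs.wordProd (β.eraseIdx (idx - α.length))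
        = v * cs.simple t := by
      rw [← wordProd_append, ← he, herase]
    have hβval : cs.wordProd (β.eraseIdx (idx - α.length)) = u⁻¹ * (v * cs.simple t) := by
      rw [← hπ', ← hαeq, ← mul_assoc, inv_mul_cancel, one_mul]
    have hidxβ : idx - α.length < β.length := by
      rw [List.length_append] at hidx
      omega
    have hup : cs.length (u⁻¹ * (v * cs.simple t)) ≤ β.length - 1 := by
      rw [← hβval]
      have h6 := cs.length_wordProd_le (β.eraseIdx (idx - α.length))
      have h7 := List.length_eraseIdx_add_one hidxβ
      omega
    have hlow : cs.length (v * cs.simple t) ≤ cs.length u + cs.length (u⁻¹ * (v * cs.simple t)) := by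
      have := cs.length_mul_le u (u⁻¹ * (v * cs.simple t))
      rwa [mul_inv_cancel_left] at this
    have hvt1 : cs.length (v * cs.simple t) + 1 = cs.length v := by
      rcases cs.length_mul_simple v t with h' | h' <;> omega
    omega

/-- If `u ≤ v`, `t` is a right descent of `v`, and `v t v⁻¹` is a left inversion of `u`,
then `u` has a right descent `c` with `u c u⁻¹ = v t v⁻¹`. -/
lemma inversion_to_descent (hra : M.IsRightAngled) {v : W} {t : B}
    (hvt : cs.length (v * cs.simple t) < cs.length v) :
    ∀ N : ℕ, ∀ u : W, cs.length (u⁻¹ * v) ≤ N →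
    cs.length u + cs.length (u⁻¹ * v) = cs.length v →
    cs.length (v * cs.simple t * v⁻¹ * u) < cs.length u →
    ∃ c : B, cs.IsRightDescent u c ∧
      u * cs.simple c * u⁻¹ = v * cs.simple t * v⁻¹ := by
  intro N
  induction N with
  | zero =>
    intro u hN hadd hq
    have h1 : u⁻¹ * v = 1 := by
      rw [← cs.length_eq_zero_iff]; omega
    have huv : v = u := by
      have h2 := congrArg (fun x => u * x) h1
      simpa using h2
    subst huv
    exact ⟨t, hvt, rfl⟩
  | succ N ih =>
    intro u hN hadd hq
    by_cases h1 : u⁻¹ * v = 1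
    · have huv : v = u := by
        have h2 := congrArg (fun x => u * x) h1
        simpa using h2
      subst huv
      exact ⟨t, hvt, rfl⟩
    · obtain ⟨ωy, hylen, hyeq⟩ := exists_reduced_word_old cs (u⁻¹ * v)
      have hy0 : ωy ≠ [] := by
        intro hnil
        rw [hnil] at hyeq
        exact h1 (by rw [hyeq, wordProd_nil])
      obtain ⟨a, ytl, rfl⟩ : ∃ a ytl, ωy = a :: ytl := by
        cases ωy with
        | nil => exact absurd rfl hy0
        | cons a ytl => exact ⟨a, ytl, rfl⟩
      have hsplit : u⁻¹ * v = cs.simple a * cs.wordProd ytl := by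
        rw [hyeq, wordProd_cons]
      have hytl : (cs.simple a)⁻¹ * (u⁻¹ * v) = cs.wordProd ytl := by
        rw [hsplit, ← mul_assoc, inv_mul_cancel, one_mul]
      set u₁ := u * cs.simple a with hu₁
      have hu₁v : u₁⁻¹ * v = cs.wordProd ytl := by
        rw [hu₁, mul_inv_rev, cs.inv_simple, mul_assoc, ← hytl, cs.inv_simple]
      have hlytl : cs.length (cs.wordProd ytl) ≤ ytl.length := cs.length_wordProd_le _
      have hlv' : cs.length (u⁻¹ * v) = ytl.length + 1 := by
        rw [← hylen]; simp
      have hlu₁ : cs.length u₁ ≤ cs.length u + 1 := by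
        have h3 := cs.length_mul_le u (cs.simple a)
        rw [cs.length_simple] at h3
        exact h3
      have hlow : cs.length v ≤ cs.length u₁ + cs.length (u₁⁻¹ * v) := by
        have h3 := cs.length_mul_le u₁ (u₁⁻¹ * v)
        rwa [mul_inv_cancel_left] at h3
      rw [hu₁v] at hlow
      have hadd₁ : cs.length u₁ + cs.length (u₁⁻¹ * v) = cs.length v := by
        rw [hu₁v]; omega
      have hlu₁eq : cs.length u₁ = cs.length u + 1 := by omega
      have hq₁ : cs.length (v * cs.simple t * v⁻¹ * u₁) < cs.length u₁ := by
        have h3 : v * cs.simple t * v⁻¹ * u₁ = (v * cs.simple t * v⁻¹ * u) * cs.simple a := by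
          rw [hu₁, ← mul_assoc]
        rw [h3]
        have h4 := cs.length_mul_le (v * cs.simple t * v⁻¹ * u) (cs.simple a)
        rw [cs.length_simple] at h4
        omega
      obtain ⟨c, hcdesc, hceq⟩ := ih u₁ (by rw [hu₁v]; omega) hadd₁ hq₁
      have hu₁inv : u₁⁻¹ = cs.simple a * u⁻¹ := by
        rw [hu₁, mul_inv_rev, cs.inv_simple]
      by_cases hca : c = a
      · exfalso
        subst hca
        have h8 : v * cs.simple t * v⁻¹ * u = u₁ := by
          calc v * cs.simple t * v⁻¹ * u = (u₁ * cs.simple c * u₁⁻¹) * u := by rw [hceq]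
            _ = u₁ * cs.simple c * (u₁⁻¹ * u) := by rw [mul_assoc]
            _ = u₁ * cs.simple c * ((cs.simple c * u⁻¹) * u) := by rw [hu₁inv]
            _ = u₁ * cs.simple c * cs.simple c := by
                rw [mul_assoc (cs.simple c), inv_mul_cancel, mul_one]
            _ = u₁ := cs.simple_mul_simple_cancel_right c
        rw [h8] at hq
        omega
      · have hdesc_a : cs.IsRightDescent u₁ a := by
          show cs.length (u₁ * cs.simple a) < cs.length u₁
          have h11 : u₁ * cs.simple a = u := by
            rw [hu₁, cs.simple_mul_simple_cancel_right]
          rw [h11]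
          omega
        have hcomm := descents_commute cs hra hca hcdesc hdesc_a
        have h9 : cs.simple a * cs.simple c * cs.simple a = cs.simple c := by
          rw [mul_assoc, hcomm, ← mul_assoc, cs.simple_mul_simple_self, one_mul]
        have hkey : u * cs.simple c * u⁻¹ = v * cs.simple t * v⁻¹ := by
          rw [← hceq, hu₁inv, hu₁]
          calc u * cs.simple c * u⁻¹
              = u * (cs.simple a * cs.simple c * cs.simple a) * u⁻¹ := by rw [h9]
            _ = u * cs.simple a * cs.simple c * (cs.simple a * u⁻¹) := by group
        have hdesc_c : cs.IsRightDescent u c := by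
          show cs.length (u * cs.simple c) < cs.length u
          have h10 : u * cs.simple c = v * cs.simple t * v⁻¹ * u := by
            rw [← hkey]
            group
          rw [h10]
          exact hq
        exact ⟨c, hdesc_c, hkey⟩


end RAFirmAux

namespace RAFirmAux
open List CoxeterSystem
open scoped Classical
variable {B W : Type*} [Group W] {M : CoxeterMatrix B} (cs : CoxeterSystem M W)

def FSet (w : W) : Set ℕ :=
  {k | ∃ ω : List B, cs.IsReduced ω ∧ cs.wordProd ω = w ∧ k ≤ ω.length ∧
    (k = 0 ∨ cs.IsFirm (cs.wordProd (ω.take k)))}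

lemma firmness_eq (w : W) : cs.firmness w = sSup (FSet cs w) := rfl

lemma FSet_nonempty (w : W) : (FSet cs w).Nonempty := by
  obtain ⟨ω, hred, hw⟩ := cs.exists_reduced_word' w
  exact ⟨0, ω, hred, hw.symm, Nat.zero_le _, Or.inl rfl⟩

lemma FSet_bddAbove (w : W) : BddAbove (FSet cs w) := by
  refine ⟨cs.length w, ?_⟩
  rintro k ⟨ω, hred, hπ, hk, -⟩
  have h1 : cs.length (cs.wordProd ω) = ω.length := hred
  rw [hπ] at h1
  omega

lemma firmness_le_iff (w : W) (n : ℕ) :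
    cs.firmness w ≤ n ↔ ∀ k ∈ FSet cs w, k ≤ n := by
  rw [firmness_eq]
  exact csSup_le_iff (FSet_bddAbove cs w) (FSet_nonempty cs w)

lemma le_firmness {w : W} {k : ℕ} (hk : k ∈ FSet cs w) : k ≤ cs.firmness w :=
  le_csSup (FSet_bddAbove cs w) hk

lemma firmness_le_length (w : W) : cs.firmness w ≤ cs.length w := by
  rw [firmness_le_iff]
  rintro k ⟨ω, hred, hπ, hk, -⟩
  have h1 : cs.length (cs.wordProd ω) = ω.length := hred
  rw [hπ] at h1
  omega

lemma firmness_mul_simple_le {w : W} {r : B} (h : cs.IsRightDescent w r) :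
    cs.firmness (w * cs.simple r) ≤ cs.firmness w := by
  rw [firmness_le_iff]
  rintro k ⟨ω, hred, hπ, hk, hfm⟩
  apply le_firmness
  have hlen : ω.length = cs.length (w * cs.simple r) := by
    have h1 : cs.length (cs.wordProd ω) = ω.length := hred
    rw [hπ] at h1
    omega
  have hds := descent_succ cs h
  refine ⟨ω ++ [r], ?_, ?_, ?_, ?_⟩
  · show cs.length _ = _
    rw [wordProd_append, wordProd_singleton, hπ, cs.simple_mul_simple_cancel_right,
      List.length_append, List.length_singleton]
    omega
  · rw [wordProd_append, wordProd_singleton, hπ, cs.simple_mul_simple_cancel_right]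
  · rw [List.length_append]
    omega
  · rcases hfm with h0 | hf
    · exact Or.inl h0
    · exact Or.inr (by rwa [List.take_append_of_le_length hk])

lemma firm_le_firmness {u x : W} (hf : cs.IsFirm u)
    (hadd : cs.length u + cs.length (u⁻¹ * x) = cs.length x) :
    cs.length u ≤ cs.firmness x := by
  obtain ⟨α, hαlen, hαeq⟩ := exists_reduced_word_old cs u
  obtain ⟨β, hβlen, hβeq⟩ := exists_reduced_word_old cs (u⁻¹ * x)
  apply le_firmness
  refine ⟨α ++ β, ?_, ?_, ?_, Or.inr ?_⟩
  · show cs.length _ = _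
    rw [wordProd_append, ← hαeq, ← hβeq, mul_inv_cancel_left, List.length_append, hαlen, hβlen]
    omega
  · rw [wordProd_append, ← hαeq, ← hβeq, mul_inv_cancel_left]
  · rw [List.length_append, hαlen]
    omega
  · have htk : (α ++ β).take (cs.length u) = α := by
      rw [← hαlen]
      exact List.take_left
    rw [htk, ← hαeq]
    exact hf


end RAFirmAux

open RAFirmAux List CoxeterSystem
open scoped Classical

/-- `{w : F#(w) ≤ n}` is the smallest subset of `W` containing the ball `{w : ℓ(w) ≤ n}`
and closed under squares. -/
theorem firmness_le_eq_square_closure_of_ball {B W : Type*} [Group W] {M : CoxeterMatrix B}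
    (cs : CoxeterSystem M W) (hra : M.IsRightAngled) (n : ℕ) :
    {w : W | cs.length w ≤ n} ⊆ {w : W | cs.firmness w ≤ n} ∧
      cs.ClosedUnderSquares {w : W | cs.firmness w ≤ n} ∧
      ∀ T : Set W, {w : W | cs.length w ≤ n} ⊆ T → cs.ClosedUnderSquares T →
        {w : W | cs.firmness w ≤ n} ⊆ T := by
  classical
  refine ⟨?_, ?_, ?_⟩
  · intro w hw
    simp only [Set.mem_setOf_eq] at hw ⊢
    exact le_trans (firmness_le_length cs w) hw
  · -- closed under squares
    intro w hw s t hst hcomm hs ht hws hwt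
    simp only [Set.mem_setOf_eq] at hw hws hwt ⊢
    have hvt : w * cs.simple s * cs.simple t * cs.simple t = w * cs.simple s :=
      cs.simple_mul_simple_cancel_right t
    have hvs : w * cs.simple s * cs.simple t * cs.simple s = w * cs.simple t := by
      calc w * cs.simple s * cs.simple t * cs.simple s
          = w * cs.simple s * (cs.simple t * cs.simple s) := by rw [mul_assoc]
        _ = w * cs.simple s * (cs.simple s * cs.simple t) := by rw [← hcomm]
        _ = w * cs.simple s * cs.simple s * cs.simple t := by rw [← mul_assoc]
        _ = w * cs.simple t := by rw [cs.simple_mul_simple_cancel_right]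
    have hlv : cs.length (w * cs.simple s * cs.simple t) = cs.length w + 2 := by
      rcases cs.length_mul_simple (w * cs.simple s) t with h' | h'
      · rw [h', hs]
      · exfalso
        have hdys : cs.IsRightDescent (w * cs.simple s) s := by
          show cs.length (w * cs.simple s * cs.simple s) < cs.length (w * cs.simple s)
          rw [cs.simple_mul_simple_cancel_right]
          omega
        have hdyt : cs.IsRightDescent (w * cs.simple s) t := by
          show cs.length (w * cs.simple s * cs.simple t) < cs.length (w * cs.simple s)
          omega
        have hD2 := D2 cs hra (Ne.symm hst) hdyt hdys
        rw [cs.simple_mul_simple_cancel_right] at hD2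
        omega
    rw [firmness_le_iff]
    rintro k ⟨ω, hred, hπ, hk, hfm⟩
    rcases hfm with rfl | hfirm
    · exact Nat.zero_le n
    have hωlen : ω.length = cs.length (w * cs.simple s * cs.simple t) := by
      have h1 : cs.length (cs.wordProd ω) = ω.length := hred
      rw [hπ] at h1
      omega
    set u := cs.wordProd (ω.take k) with hu
    have hulen : cs.length u = k := by
      have h1 : cs.length (cs.wordProd (ω.take k)) = (ω.take k).length :=
        hred.take k
      rw [hu, h1, List.length_take]
      omega
    have hdropadd : cs.length u + cs.length (u⁻¹ * (w * cs.simple s * cs.simple t))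
        = cs.length (w * cs.simple s * cs.simple t) := by
      have hsplit : u * cs.wordProd (ω.drop k) = w * cs.simple s * cs.simple t := by
        rw [hu, ← wordProd_append, List.take_append_drop, hπ]
      have huv : u⁻¹ * (w * cs.simple s * cs.simple t) = cs.wordProd (ω.drop k) := by
        rw [← hsplit, inv_mul_cancel_left]
      have h3 : cs.length (cs.wordProd (ω.drop k)) = (ω.drop k).length :=
        hred.drop k
      rw [huv, h3, List.length_drop]
      omega
    have hvt_lt : cs.length (w * cs.simple s * cs.simple t * cs.simple t)
        < cs.length (w * cs.simple s * cs.simple t) := by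
      rw [hvt, hlv]
      omega
    have hvs_lt : cs.length (w * cs.simple s * cs.simple t * cs.simple s)
        < cs.length (w * cs.simple s * cs.simple t) := by
      rw [hvs, hlv, ht]
      omega
    rcases prefix_or_inversion cs hdropadd hra hvt_lt with hL | hR
    · rw [hvt] at hL
      have := firm_le_firmness cs hfirm hL
      omega
    rcases prefix_or_inversion cs hdropadd hra hvs_lt with hL' | hR'
    · rw [hvs] at hL'
      have := firm_le_firmness cs hfirm hL'
      omega
    · exfalso
      obtain ⟨c, hcd, hce⟩ := inversion_to_descent cs hra hvt_lt
        (cs.length (u⁻¹ * (w * cs.simple s * cs.simple t))) u le_rfl hdropadd hR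
      obtain ⟨d, hdd, hde⟩ := inversion_to_descent cs hra hvs_lt
        (cs.length (u⁻¹ * (w * cs.simple s * cs.simple t))) u le_rfl hdropadd hR'
      obtain ⟨r, hr, hru⟩ := hfirm
      have hc : c = r := hru c hcd
      have hd : d = r := hru d hdd
      rw [hc] at hce
      rw [hd] at hde
      have heq : w * cs.simple s * cs.simple t * cs.simple t
          * (w * cs.simple s * cs.simple t)⁻¹
          = w * cs.simple s * cs.simple t * cs.simple s
          * (w * cs.simple s * cs.simple t)⁻¹ := by
        rw [← hce, hde]
      have h2 : cs.simple t = cs.simple s := by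
        have h3 := mul_right_cancel heq
        exact mul_left_cancel h3
      exact simple_ne cs hra (Ne.symm hst) h2
  · -- minimality
    intro T hball hclosed
    have key : ∀ m : ℕ, ∀ w : W, cs.length w = m → cs.firmness w ≤ n → w ∈ T := by
      intro m
      induction m using Nat.strong_induction_on with
      | _ m ih =>
        intro w hlw hfw
        by_cases hn : cs.length w ≤ n
        · exact hball hn
        push_neg at hn
        have hw1 : w ≠ 1 := by
          intro h
          rw [h, cs.length_one] at hn
          omega
        have hnotfirm : ¬ cs.IsFirm w := by
          intro hf
          have hge : cs.length w ≤ cs.firmness w := by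
            apply le_firmness
            obtain ⟨ω, hred, hweq⟩ := cs.exists_reduced_word' w
            have hlen : ω.length = cs.length w := by
              have h1 : cs.length (cs.wordProd ω) = ω.length := hred
              rw [← hweq] at h1
              omega
            refine ⟨ω, hred, hweq.symm, by omega, Or.inr ?_⟩
            have htk : ω.take (cs.length w) = ω := List.take_of_length_le (by omega)
            rw [htk, ← hweq]
            exact hf
          omega
        obtain ⟨s0, hds0⟩ := cs.exists_rightDescent_of_ne_one hw1
        have hex : ∃ t0, cs.IsRightDescent w t0 ∧ t0 ≠ s0 := by
          by_contra hcon
          push_neg at hcon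
          exact hnotfirm ⟨s0, hds0, fun y hy => hcon y hy⟩
        obtain ⟨t0, hdt0, hts⟩ := hex
        have hcomm := descents_commute cs hra hts hdt0 hds0
        have hD2 := D2 cs hra hts hdt0 hds0
        have hws0 := descent_succ cs hds0
        have hwt0 := descent_succ cs hdt0
        have e1 : w * cs.simple s0 * cs.simple t0 * cs.simple t0 = w * cs.simple s0 :=
          cs.simple_mul_simple_cancel_right t0
        have e2 : w * cs.simple s0 * cs.simple t0 * cs.simple s0 = w * cs.simple t0 := by
          calc w * cs.simple s0 * cs.simple t0 * cs.simple s0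
              = w * cs.simple s0 * (cs.simple t0 * cs.simple s0) := by rw [mul_assoc]
            _ = w * cs.simple s0 * (cs.simple s0 * cs.simple t0) := by rw [hcomm]
            _ = w * cs.simple s0 * cs.simple s0 * cs.simple t0 := by rw [← mul_assoc]
            _ = w * cs.simple t0 := by rw [cs.simple_mul_simple_cancel_right]
        have hfs0 : cs.firmness (w * cs.simple s0) ≤ n :=
          le_trans (firmness_mul_simple_le cs hds0) hfw
        have hft0 : cs.firmness (w * cs.simple t0) ≤ n :=
          le_trans (firmness_mul_simple_le cs hdt0) hfw
        have hdw0 : cs.IsRightDescent (w * cs.simple s0) t0 := by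
          show cs.length (w * cs.simple s0 * cs.simple t0) < cs.length (w * cs.simple s0)
          omega
        have hfw0 : cs.firmness (w * cs.simple s0 * cs.simple t0) ≤ n :=
          le_trans (firmness_mul_simple_le cs hdw0) hfs0
        have hmem_w0 : w * cs.simple s0 * cs.simple t0 ∈ T :=
          ih (cs.length (w * cs.simple s0 * cs.simple t0)) (by omega) _ rfl hfw0
        have hmem_ws0 : w * cs.simple s0 ∈ T :=
          ih (cs.length (w * cs.simple s0)) (by omega) _ rfl hfs0
        have hmem_wt0 : w * cs.simple t0 ∈ T :=
          ih (cs.length (w * cs.simple t0)) (by omega) _ rfl hft0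
        have happ := hclosed (w * cs.simple s0 * cs.simple t0) hmem_w0 s0 t0
          (Ne.symm hts) hcomm.symm
          (by rw [e2]; omega)
          (by rw [e1]; omega)
          (by rw [e2]; exact hmem_wt0)
          (by rw [e1]; exact hmem_ws0)
        have hfin : w * cs.simple s0 * cs.simple t0 * cs.simple s0 * cs.simple t0 = w := by
          rw [e2, cs.simple_mul_simple_cancel_right]
        rwa [hfin] at happ
    intro w hw
    exact key (cs.length w) w rfl hw
end

section
/- (Closing squares, first form, in the Coxeter group.) Let (W,S) be a right-angled Coxeter system. Let n ≥ 1 and let w₁, w₂, w₃ ∈ W with ℓ(w₁) = ℓ(w₂) = n and ℓ(w₃) = n + 1, and suppose w₃ = w₁ t = w₂ s for distinct generators s, t ∈ S. Then st = ts in W, the element w₄ := w₁ s equals w₂ t, and ℓ(w₄) = n − 1. -/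
open List


namespace ClosingSqAux

theorem eraseIdx_append_left' {α : Type*} : ∀ (l l' : List α) (p : ℕ), p < l.length →
    (l ++ l').eraseIdx p = l.eraseIdx p ++ l'
  | [], _, p, h => by simp at h
  | a :: l, l', 0, h => by simp [List.eraseIdx]
  | a :: l, l', p+1, h => by
    simp only [List.cons_append, List.eraseIdx, List.append_eq]
    rw [eraseIdx_append_left' l l' p (by simpa using h)]

theorem eraseIdx_append_right' {α : Type*} : ∀ (l l' : List α) (p : ℕ), l.length ≤ p →
    (l ++ l').eraseIdx p = l ++ l'.eraseIdx (p - l.length)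
  | [], _, p, _ => by simp
  | a :: l, l', p+1, h => by
    simp only [List.cons_append, List.eraseIdx, List.append_eq]
    rw [eraseIdx_append_right' l l' p (by simpa using h)]
    simp
  | a :: l, l', 0, h => by simp at h

theorem sum_range_two_mul (h : ℕ → ZMod 2) :
    ∀ m : ℕ, ∑ e ∈ Finset.range (2*m), h e = ∑ k ∈ Finset.range m, (h (2*k) + h (2*k+1))
  | 0 => by simp
  | m+1 => by
    rw [Finset.sum_range_succ, show 2*(m+1) = 2*m+1+1 by ring, Finset.sum_range_succ,
      Finset.sum_range_succ, sum_range_two_mul h m]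
    ring

variable {B W : Type*} [Group W] {M : CoxeterMatrix B} (cs : CoxeterSystem M W)

open scoped Classical

/-- "Affine" permutations of `W × ZMod 2`: conjugation on the first coordinate,
adding a cocycle on the second. -/
def aff (q : W) (c : W → ZMod 2) : Equiv.Perm (W × ZMod 2) where
  toFun x := (q * x.1 * q⁻¹, x.2 + c x.1)
  invFun x := (q⁻¹ * x.1 * q, x.2 - c (q⁻¹ * x.1 * q))
  left_inv x := by
    have : q⁻¹ * (q * x.1 * q⁻¹) * q = x.1 := by group
    simp [this]
  right_inv x := by
    have : q * (q⁻¹ * x.1 * q) * q⁻¹ = x.1 := by group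
    simp [this]

theorem aff_apply (q : W) (c : W → ZMod 2) (x : W × ZMod 2) :
    aff q c x = (q * x.1 * q⁻¹, x.2 + c x.1) := rfl

theorem aff_one : aff (1 : W) (fun _ => 0) = 1 := by
  ext x <;> simp [aff_apply]

theorem aff_mul (q q' : W) (c c' : W → ZMod 2) :
    aff q c * aff q' c' = aff (q * q') (fun x => c' x + c (q' * x * q'⁻¹)) := by
  apply Equiv.ext
  intro x
  rw [Equiv.Perm.mul_apply]
  simp only [aff_apply]
  rw [Prod.mk.injEq]
  constructor
  · group
  · rw [add_assoc]

theorem aff_pow (q : W) (c : W → ZMod 2) : ∀ m : ℕ,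
    aff q c ^ m = aff (q ^ m) (fun x => ∑ k ∈ Finset.range m, c (q^k * x * (q^k)⁻¹))
  | 0 => by
    rw [pow_zero, pow_zero]
    simp only [Finset.range_zero, Finset.sum_empty]
    exact aff_one.symm
  | m+1 => by
    rw [pow_succ, aff_pow q c m, aff_mul, ← pow_succ]
    congr 1
    funext x
    rw [Finset.sum_range_succ']
    simp only [pow_zero, one_mul, inv_one, mul_one]
    rw [add_comm]
    congr 1
    apply Finset.sum_congr rfl
    intro k _
    congr 1
    rw [pow_succ]
    group

open scoped Classical in
/-- Tits permutation: the image of the simple generator `i`. -/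
noncomputable def mu (i : B) : Equiv.Perm (W × ZMod 2) :=
  aff (cs.simple i) (fun x => if x = cs.simple i then 1 else 0)

theorem simple_mul_zpow (i j : B) (k : ℤ) :
    cs.simple j * (cs.simple i * cs.simple j) ^ k
      = (cs.simple i * cs.simple j) ^ (-k) * cs.simple j := by
  have key : cs.simple j * (cs.simple i * cs.simple j) * (cs.simple j)⁻¹
      = (cs.simple i * cs.simple j)⁻¹ := by
    simp [mul_inv_rev, mul_assoc]
  have h1 : cs.simple j * (cs.simple i * cs.simple j) ^ k * (cs.simple j)⁻¹
      = (cs.simple i * cs.simple j) ^ (-k) := by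
    have := map_zpow (MulAut.conj (cs.simple j)) (cs.simple i * cs.simple j) k
    simp only [MulAut.conj_apply] at this key
    rw [this, key, inv_zpow, ← zpow_neg]
  calc cs.simple j * (cs.simple i * cs.simple j) ^ k
      = (cs.simple j * (cs.simple i * cs.simple j) ^ k * (cs.simple j)⁻¹) * cs.simple j := by
        group
    _ = (cs.simple i * cs.simple j) ^ (-k) * cs.simple j := by rw [h1]

open scoped Classical in
theorem mu_liftable : M.IsLiftable (mu cs) := by
  intro i j
  set p := cs.simple i * cs.simple j with hp
  set m := M i j with hm
  have hpm : p ^ m = 1 := cs.simple_mul_simple_pow i j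
  have hcomm : ∀ k : ℤ, cs.simple j * p ^ k = p ^ (-k) * cs.simple j :=
    simple_mul_zpow cs i j
  -- the product is an affine permutation
  have h1 : mu cs i * mu cs j = aff p (fun x =>
      (if x = cs.simple j then 1 else 0)
        + (if cs.simple j * x * (cs.simple j)⁻¹ = cs.simple i then 1 else 0)) := by
    rw [mu, mu, aff_mul]
  rw [h1, aff_pow, hpm]
  have hsum : ∀ x : W, ∑ k ∈ Finset.range m,
      ((if p^k * x * (p^k)⁻¹ = cs.simple j then (1 : ZMod 2) else 0)
        + (if cs.simple j * (p^k * x * (p^k)⁻¹) * (cs.simple j)⁻¹ = cs.simple i then 1 else 0))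
      = 0 := by
    intro x
    set g : ℕ → ZMod 2 := fun e => if x = p ^ (-(e:ℤ)) * cs.simple j then 1 else 0 with hg
    have hterm : ∀ k : ℕ,
        ((if p^k * x * (p^k)⁻¹ = cs.simple j then (1 : ZMod 2) else 0)
        + (if cs.simple j * (p^k * x * (p^k)⁻¹) * (cs.simple j)⁻¹ = cs.simple i then 1 else 0))
        = g (2*k) + g (2*k+1) := by
      intro k
      congr 1
      · -- first indicator
        have hiff : (p^k * x * (p^k)⁻¹ = cs.simple j) ↔ (x = p ^ (-(2*k:ℕ):ℤ) * cs.simple j) := by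
          rw [show ((-(2*k:ℕ):ℤ)) = -(k:ℤ) + -(k:ℤ) by push_cast; ring, zpow_add]
          constructor
          · intro h
            have : x = (p^k)⁻¹ * cs.simple j * p^k := by
              rw [← h]; group
            rw [this, ← zpow_natCast p k, ← zpow_neg]
            rw [show p ^ (-(k:ℤ)) * cs.simple j * p ^ (k:ℤ)
                = p ^ (-(k:ℤ)) * (cs.simple j * p ^ (k:ℤ)) by group, hcomm]
            group
          · intro h
            rw [h]
            rw [show p ^ (-(k:ℤ)) * p ^ (-(k:ℤ)) * cs.simple j
                = p ^ (-(k:ℤ)) * (p ^ (-(k:ℤ)) * cs.simple j) by group, ← hcomm]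
            rw [← zpow_natCast p k, ← zpow_neg]
            group
        simp only [hg, hiff]
      · -- second indicator
        have hrw : cs.simple j * (p^k * x * (p^k)⁻¹) * (cs.simple j)⁻¹ = cs.simple i
            ↔ x = p ^ (-(2*k+1:ℕ):ℤ) * cs.simple j := by
          have e1 : cs.simple j * (p^k * x * (p^k)⁻¹) * (cs.simple j)⁻¹ = cs.simple i
              ↔ x = (p^k)⁻¹ * ((cs.simple j)⁻¹ * cs.simple i * cs.simple j) * p^k := by
            constructor
            · intro h
              have := h
              rw [← this]; group
            · intro h; rw [h]; group
          rw [e1]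
          have e2 : (cs.simple j)⁻¹ * cs.simple i * cs.simple j
              = p ^ (-1:ℤ) * cs.simple j := by
            rw [cs.inv_simple, zpow_neg, zpow_one, hp, mul_inv_rev,
              cs.inv_simple, cs.inv_simple]
          rw [e2]
          have e3 : (p^k)⁻¹ * (p ^ (-1:ℤ) * cs.simple j) * p^k
              = p ^ (-(2*k+1:ℕ):ℤ) * cs.simple j := by
            rw [← zpow_natCast p k, ← zpow_neg]
            rw [show p ^ (-(k:ℤ)) * (p ^ (-1:ℤ) * cs.simple j) * p ^ (k:ℤ)
                = (p ^ (-(k:ℤ)) * p ^ (-1:ℤ)) * (cs.simple j * p ^ (k:ℤ)) by group, hcomm]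
            rw [← zpow_add]
            rw [show p ^ (-(k:ℤ) + -1) * (p ^ (-(k:ℤ)) * cs.simple j)
                = (p ^ (-(k:ℤ) + -1) * p ^ (-(k:ℤ))) * cs.simple j by group, ← zpow_add]
            congr 1
            push_cast
            ring
          rw [e3]
        simp only [hg, hrw]
    calc ∑ k ∈ Finset.range m,
        ((if p^k * x * (p^k)⁻¹ = cs.simple j then (1 : ZMod 2) else 0)
        + (if cs.simple j * (p^k * x * (p^k)⁻¹) * (cs.simple j)⁻¹ = cs.simple i then 1 else 0))
        = ∑ k ∈ Finset.range m, (g (2*k) + g (2*k+1)) := by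
          apply Finset.sum_congr rfl
          intro k _
          exact hterm k
      _ = ∑ e ∈ Finset.range (2*m), g e := (sum_range_two_mul g m).symm
      _ = ∑ e ∈ Finset.range (m+m), g e := by rw [two_mul]
      _ = ∑ e ∈ Finset.range m, g e + ∑ e ∈ Finset.range m, g (m+e) := by
          rw [Finset.sum_range_add]
      _ = ∑ e ∈ Finset.range m, (g e + g (m+e)) := by rw [Finset.sum_add_distrib]
      _ = 0 := by
          apply Finset.sum_eq_zero
          intro e _
          have : g (m+e) = g e := by
            have hexp : p ^ (-((m+e:ℕ)):ℤ) = p ^ (-(e:ℤ)) := by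
              rw [show (-((m+e:ℕ)):ℤ) = -(e:ℤ) + -(m:ℤ) by push_cast; ring, zpow_add,
                show p ^ (-(m:ℤ)) = (p ^ m)⁻¹ by rw [zpow_neg, zpow_natCast], hpm,
                inv_one, mul_one]
            simp only [hg, hexp]
          rw [this]
          exact CharTwo.add_self_eq_zero (g e)
  refine Eq.trans ?_ aff_one
  congr 1
  funext x
  simpa using hsum x

noncomputable def psi : W →* Equiv.Perm (W × ZMod 2) := cs.lift ⟨mu cs, mu_liftable cs⟩

open scoped Classical in
theorem psi_simple (i : B) : psi cs (cs.simple i) = mu cs i :=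
  cs.lift_apply_simple (mu_liftable cs) i

noncomputable def nu (w x : W) : ZMod 2 := ((psi cs w) (x, 0)).2

theorem exists_aff (w : W) : ∃ c : W → ZMod 2, psi cs w = aff w c := by
  classical
  obtain ⟨ω, rfl⟩ := cs.wordProd_surjective w
  induction ω with
  | nil =>
    refine ⟨fun _ => 0, ?_⟩
    rw [cs.wordProd_nil, map_one, aff_one]
  | cons i ω ih =>
    obtain ⟨c, hc⟩ := ih
    refine ⟨fun x => c x + (if cs.wordProd ω * x * (cs.wordProd ω)⁻¹ = cs.simple i
      then 1 else 0), ?_⟩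
    rw [cs.wordProd_cons, map_mul, hc, psi_simple, mu, aff_mul]

theorem psi_apply (w x : W) (ε : ZMod 2) :
    psi cs w (x, ε) = (w * x * w⁻¹, ε + nu cs w x) := by
  obtain ⟨c, hc⟩ := exists_aff cs w
  have hn : nu cs w x = c x := by
    rw [nu, hc, aff_apply, zero_add]
  rw [hc, aff_apply, hn]

theorem nu_mul (u v x : W) : nu cs (u * v) x = nu cs v x + nu cs u (v * x * v⁻¹) := by
  have : psi cs (u * v) (x, 0) = psi cs u (psi cs v (x, 0)) := by
    rw [map_mul]; rfl
  rw [nu, this, psi_apply, psi_apply]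
  simp

theorem nu_one (x : W) : nu cs 1 x = 0 := by
  rw [nu, map_one]
  rfl

open scoped Classical in
theorem nu_simple (i : B) (x : W) :
    nu cs (cs.simple i) x = if x = cs.simple i then 1 else 0 := by
  rw [nu, psi_simple, mu, aff_apply, zero_add]

theorem nu_inv (u x : W) : nu cs u⁻¹ x = nu cs u (u⁻¹ * x * u) := by
  have h := nu_mul cs u u⁻¹ x
  rw [mul_inv_cancel, nu_one, inv_inv] at h
  have h2 : nu cs u⁻¹ x = - nu cs u (u⁻¹ * x * u) := eq_neg_of_add_eq_zero_left h.symm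
  rw [h2, CharTwo.neg_eq]

theorem nu_reflection_self {t : W} (ht : cs.IsReflection t) : nu cs t t = 1 := by
  classical
  obtain ⟨u, i, rfl⟩ := ht
  set t := u * cs.simple i * u⁻¹ with hdef
  have h1 : nu cs t t = nu cs (cs.simple i * u⁻¹) t + nu cs u
      ((cs.simple i * u⁻¹) * t * (cs.simple i * u⁻¹)⁻¹) := by
    rw [show t = u * (cs.simple i * u⁻¹) by rw [hdef]; group]
    exact nu_mul cs u (cs.simple i * u⁻¹) _
  have harg : (cs.simple i * u⁻¹) * t * (cs.simple i * u⁻¹)⁻¹ = cs.simple i := by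
    rw [hdef, mul_inv_rev, inv_inv, cs.inv_simple]
    have : cs.simple i * u⁻¹ * (u * cs.simple i * u⁻¹) * (u * cs.simple i)
        = cs.simple i * (cs.simple i * cs.simple i) := by group
    rw [this, cs.simple_mul_simple_self, mul_one]
  have h2 : nu cs (cs.simple i * u⁻¹) t = nu cs u⁻¹ t + nu cs (cs.simple i)
      (u⁻¹ * t * (u⁻¹)⁻¹) := nu_mul cs (cs.simple i) u⁻¹ t
  have harg2 : u⁻¹ * t * (u⁻¹)⁻¹ = cs.simple i := by
    rw [hdef]; group
  have h3 : nu cs u⁻¹ t = nu cs u (u⁻¹ * t * u) := nu_inv cs u t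
  have harg3 : u⁻¹ * t * u = cs.simple i := by rw [hdef]; group
  rw [h1, harg, h2, harg2, h3, harg3, nu_simple, if_pos rfl]
  have : ∀ a : ZMod 2, a + 1 + a = 1 := by decide
  exact this _

theorem nu_wordProd (ω : List B) (x : W) :
    nu cs (cs.wordProd ω) x
      = ((cs.rightInvSeq ω).map fun u => if u = x then (1 : ZMod 2) else 0).sum := by
  classical
  induction ω with
  | nil => rw [cs.wordProd_nil, cs.rightInvSeq_nil]; exact nu_one cs x
  | cons i ω ih =>
    rw [cs.wordProd_cons, nu_mul, ih, nu_simple]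
    have hris : cs.rightInvSeq (i :: ω)
        = ((cs.wordProd ω)⁻¹ * (cs.simple i) * (cs.wordProd ω)) :: cs.rightInvSeq ω := rfl
    rw [hris, List.map_cons, List.sum_cons]
    have hcond : (cs.wordProd ω * x * (cs.wordProd ω)⁻¹ = cs.simple i)
        ↔ ((cs.wordProd ω)⁻¹ * cs.simple i * cs.wordProd ω = x) := by
      constructor
      · intro h; rw [← h]; group
      · intro h; rw [← h]; group
    rw [if_congr hcond rfl rfl]
    exact (add_comm _ _)

theorem indicator_sum (x : W) : ∀ l : List W,
    (l.map fun u => if u = x then (1 : ZMod 2) else 0).sum = (l.count x : ZMod 2) := by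
  classical
  intro l
  induction l with
  | nil => simp
  | cons a l ih =>
    rw [List.map_cons, List.sum_cons, ih, List.count_cons]
    push_cast
    by_cases h : a = x <;> simp [h, add_comm]

theorem nu_eq_one_iff {ω : List B} (hred : cs.IsReduced ω) (x : W) :
    nu cs (cs.wordProd ω) x = 1 ↔ x ∈ cs.rightInvSeq ω := by
  classical
  rw [nu_wordProd, indicator_sum]
  constructor
  · intro h
    by_contra hmem
    rw [List.count_eq_zero_of_not_mem hmem] at h
    simp at h
  · intro hmem
    rw [List.count_eq_one_of_mem (hred.nodup_rightInvSeq) hmem]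
    rfl

theorem mem_rightInvSeq_of_isRightInversion {ω : List B} (hred : cs.IsReduced ω) {t : W}
    (ht : cs.IsRightInversion (cs.wordProd ω) t) : t ∈ cs.rightInvSeq ω := by
  obtain ⟨htr, hlt⟩ := ht
  set w := cs.wordProd ω with hw
  have hkey : nu cs w t = 1 + nu cs (w * t) t := by
    have h := nu_mul cs (w * t) t t
    rw [show w * t * t = w by rw [mul_assoc, htr.mul_self, mul_one]] at h
    rw [h, nu_reflection_self cs htr]
    congr 1
    rw [show t * t * t⁻¹ = t by rw [htr.mul_self, one_mul, htr.inv]]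
  have hz : nu cs (w * t) t = 0 := by
    by_contra hne
    have h1 : nu cs (w * t) t = 1 := by
      have : ∀ a : ZMod 2, a ≠ 0 → a = 1 := by decide
      exact this _ hne
    obtain ⟨ω', hred', hπ'⟩ := cs.exists_reduced_word' (w * t)
    rw [hπ'] at h1
    have hmem := (nu_eq_one_iff cs hred' t).mp h1
    have hinv := cs.isRightInversion_of_mem_rightInvSeq hred' hmem
    rw [← hπ'] at hinv
    have := hinv.2
    rw [mul_assoc, htr.mul_self, mul_one] at this
    omega
  rw [hz, add_zero] at hkey
  exact (nu_eq_one_iff cs hred t).mp hkey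

/-- The right exchange property. -/
theorem rightExchange {w : W} {i : B} (hd : cs.IsRightDescent w i) {ω : List B}
    (hred : cs.IsReduced ω) (hπ : cs.wordProd ω = w) :
    ∃ j < ω.length, w * cs.simple i = cs.wordProd (ω.eraseIdx j) := by
  have hinv : cs.IsRightInversion (cs.wordProd ω) (cs.simple i) := by
    rw [hπ]
    exact (cs.isRightInversion_simple_iff_isRightDescent w i).mpr hd
  have hmem := mem_rightInvSeq_of_isRightInversion cs hred hinv
  obtain ⟨j, hj, hget⟩ := List.mem_iff_getElem.mp hmem
  rw [cs.length_rightInvSeq] at hj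
  refine ⟨j, hj, ?_⟩
  rw [← hπ, ← cs.wordProd_mul_getD_rightInvSeq ω j]
  congr 1
  rw [← hget]
  exact (List.getD_eq_getElem _ _ (by rw [cs.length_rightInvSeq]; exact hj)).symm

theorem isReduced_iff' (ω : List B) :
    cs.IsReduced ω ↔ cs.length (cs.wordProd ω) = ω.length := Iff.rfl

theorem descent_word {w : W} {i : B} (hd : cs.IsRightDescent w i) :
    ∃ ω' : List B, cs.IsReduced (ω' ++ [i]) ∧ cs.wordProd (ω' ++ [i]) = w := by
  obtain ⟨ω', hred', hπ'⟩ := cs.exists_reduced_word' (w * cs.simple i)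
  have hπ : cs.wordProd (ω' ++ [i]) = w := by
    rw [cs.wordProd_append, ← hπ', cs.wordProd_singleton, mul_assoc,
      cs.simple_mul_simple_self, mul_one]
  refine ⟨ω', ?_, hπ⟩
  rw [isReduced_iff', hπ, List.length_append, List.length_singleton]
  rw [show ω'.length = cs.length (w * cs.simple i) by
    rw [hπ']; exact ((isReduced_iff' cs ω').mp hred').symm]
  exact (cs.isRightDescent_iff.mp hd).symm

theorem descent_pair {w : W} {i j : B} (hne : cs.simple i ≠ cs.simple j)
    (hdi : cs.IsRightDescent w i) (hdj : cs.IsRightDescent w j) :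
    ∃ ω' : List B, cs.IsReduced (ω' ++ [i, j]) ∧ cs.wordProd (ω' ++ [i, j]) = w := by
  obtain ⟨ω₀, hred₀, hπ₀⟩ := descent_word cs hdi
  obtain ⟨p, hp, hpe⟩ := rightExchange cs hdj hred₀ hπ₀
  rw [List.length_append, List.length_singleton] at hp
  have hω₀len : ω₀.length + 1 = cs.length w := by
    have h0 : cs.length (cs.wordProd (ω₀ ++ [i])) = (ω₀ ++ [i]).length := hred₀
    rw [hπ₀, List.length_append, List.length_singleton] at h0
    exact h0.symm
  rcases Nat.lt_or_ge p ω₀.length with hlt | hge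
  · -- deletion inside ω₀
    rw [eraseIdx_append_left' _ _ _ hlt] at hpe
    have hπnew : cs.wordProd (ω₀.eraseIdx p ++ [i, j]) = w := by
      rw [show (ω₀.eraseIdx p ++ [i, j]) = ((ω₀.eraseIdx p ++ [i]) ++ [j]) by simp,
        cs.wordProd_append, ← hpe, cs.wordProd_singleton, mul_assoc,
        cs.simple_mul_simple_self, mul_one]
    refine ⟨ω₀.eraseIdx p, ?_, hπnew⟩
    rw [isReduced_iff', hπnew]
    have hlen : (ω₀.eraseIdx p).length + 1 = ω₀.length := List.length_eraseIdx_add_one hlt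
    have hlen2 : (ω₀.eraseIdx p ++ [i, j]).length = (ω₀.eraseIdx p).length + 2 := by simp
    rw [hlen2]
    omega
  · -- deletion of the final letter: contradiction
    exfalso
    have hpeq : p = ω₀.length := by omega
    rw [hpeq, eraseIdx_append_right' _ _ _ (le_refl _)] at hpe
    simp only [Nat.sub_self, List.eraseIdx, List.append_nil] at hpe
    have hπω₀ : cs.wordProd ω₀ = w * cs.simple i := by
      have h1 : cs.wordProd (ω₀ ++ [i]) = cs.wordProd ω₀ * cs.simple i := by
        rw [cs.wordProd_append, cs.wordProd_singleton]
      rw [h1] at hπ₀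
      rw [← hπ₀, mul_assoc, cs.simple_mul_simple_self, mul_one]
    rw [hπω₀] at hpe
    exact hne (mul_left_cancel hpe).symm

theorem no_two_descents_of_alt_reduced {w : W} {i j : B}
    (haltred : ∀ k, cs.IsReduced (CoxeterSystem.alternatingWord i j k)
      ∧ cs.IsReduced (CoxeterSystem.alternatingWord j i k))
    (hdi : cs.IsRightDescent w i) (hdj : cs.IsRightDescent w j) : False := by
  have step : ∀ (a b : B) (k : ℕ), cs.IsRightDescent w a →
      cs.IsReduced (CoxeterSystem.alternatingWord b a (k+1)) →
      (∃ ω' : List B, cs.IsReduced (ω' ++ CoxeterSystem.alternatingWord a b k)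
        ∧ cs.wordProd (ω' ++ CoxeterSystem.alternatingWord a b k) = w) →
      (∃ ω' : List B, cs.IsReduced (ω' ++ CoxeterSystem.alternatingWord b a (k+1))
        ∧ cs.wordProd (ω' ++ CoxeterSystem.alternatingWord b a (k+1)) = w) := by
    intro a b k hda hra hP
    obtain ⟨ω', hred', hπ'⟩ := hP
    set A := CoxeterSystem.alternatingWord a b k with hA
    have hAlen : A.length = k := CoxeterSystem.length_alternatingWord a b k
    have hBA : CoxeterSystem.alternatingWord b a (k+1) = A ++ [a] := by
      rw [CoxeterSystem.alternatingWord_succ, List.concat_eq_append, hA]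
    obtain ⟨p, hp, hpe⟩ := rightExchange cs hda hred' hπ'
    rw [List.length_append, hAlen] at hp
    have hwlen : ω'.length + k = cs.length w := by
      have h0 : cs.length (cs.wordProd (ω' ++ A)) = (ω' ++ A).length := hred'
      rw [hπ', List.length_append, hAlen] at h0
      exact h0.symm
    rcases Nat.lt_or_ge p ω'.length with hlt | hge
    · rw [eraseIdx_append_left' _ _ _ hlt] at hpe
      have hlen'' : (ω'.eraseIdx p).length + 1 = ω'.length :=
        List.length_eraseIdx_add_one hlt
      have hπnew : cs.wordProd (ω'.eraseIdx p ++ CoxeterSystem.alternatingWord b a (k+1))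
          = w := by
        rw [hBA, show ω'.eraseIdx p ++ (A ++ [a]) = (ω'.eraseIdx p ++ A) ++ [a] by
          rw [List.append_assoc], cs.wordProd_append, ← hpe, cs.wordProd_singleton,
          mul_assoc, cs.simple_mul_simple_self, mul_one]
      refine ⟨ω'.eraseIdx p, ?_, hπnew⟩
      rw [isReduced_iff', hπnew, List.length_append,
        CoxeterSystem.length_alternatingWord]
      omega
    · exfalso
      rw [eraseIdx_append_right' _ _ _ hge] at hpe
      set p' := p - ω'.length with hp'
      have hp'k : p' < k := by omega
      have hcancel : cs.wordProd A * cs.simple a = cs.wordProd (A.eraseIdx p') := by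
        apply mul_left_cancel (a := cs.wordProd ω')
        rw [← mul_assoc, ← cs.wordProd_append, hπ', ← cs.wordProd_append, ← hpe]
      have hL : cs.length (cs.wordProd (CoxeterSystem.alternatingWord b a (k+1))) = k+1 := by
        have h0 : cs.length (cs.wordProd (CoxeterSystem.alternatingWord b a (k+1)))
            = (CoxeterSystem.alternatingWord b a (k+1)).length := hra
        rw [CoxeterSystem.length_alternatingWord] at h0
        exact h0
      have hR : cs.length (cs.wordProd (A.eraseIdx p')) ≤ k - 1 := by
        have h1 := cs.length_wordProd_le (A.eraseIdx p')
        have h2 : (A.eraseIdx p').length + 1 = k := by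
          rw [← hAlen]
          exact List.length_eraseIdx_add_one (by omega)
        omega
      have hBAprod : cs.wordProd (CoxeterSystem.alternatingWord b a (k+1))
          = cs.wordProd A * cs.simple a := by
        rw [hBA, cs.wordProd_append, cs.wordProd_singleton]
      rw [hBAprod, hcancel] at hL
      omega
  have key : ∀ k : ℕ,
      (∃ ω' : List B, cs.IsReduced (ω' ++ CoxeterSystem.alternatingWord i j k)
        ∧ cs.wordProd (ω' ++ CoxeterSystem.alternatingWord i j k) = w)
      ∧ (∃ ω' : List B, cs.IsReduced (ω' ++ CoxeterSystem.alternatingWord j i k)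
        ∧ cs.wordProd (ω' ++ CoxeterSystem.alternatingWord j i k) = w) := by
    intro k
    induction k with
    | zero =>
      obtain ⟨ω, hred, hπ⟩ := cs.exists_reduced_word' w
      have h0 : ∀ b a : B, CoxeterSystem.alternatingWord b a 0 = ([] : List B) := by
        intro b a; rfl
      constructor <;> exact ⟨ω, by rw [h0, List.append_nil]; exact hred,
        by rw [h0, List.append_nil]; exact hπ.symm⟩
    | succ k ih =>
      exact ⟨step j i k hdj (haltred (k+1)).1 ih.2, step i j k hdi (haltred (k+1)).2 ih.1⟩
  obtain ⟨ω', hred', hπ'⟩ := (key (cs.length w + 1)).1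
  have h1 : cs.length w = ω'.length + (cs.length w + 1) := by
    have h0 : cs.length (cs.wordProd (ω' ++ CoxeterSystem.alternatingWord i j
        (cs.length w + 1))) = (ω' ++ CoxeterSystem.alternatingWord i j
        (cs.length w + 1)).length := hred'
    rw [hπ', List.length_append, CoxeterSystem.length_alternatingWord] at h0
    exact h0
  omega

/-- A Coxeter matrix is right-angled if off-diagonal entries are 2 or 0. -/
def IsRA (M : CoxeterMatrix B) : Prop := ∀ i j : B, i ≠ j → M i j = 2 ∨ M i j = 0

theorem liftable_of_pairs {G : Type*} [Group G] (hra : IsRA M) (f : B → G)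
    (hinv : ∀ x, f x * f x = 1) (hcomm : ∀ x y, M x y = 2 → f x * f y = f y * f x) :
    M.IsLiftable f := by
  intro x y
  by_cases hxy : x = y
  · subst hxy; rw [M.diagonal, pow_one]; exact hinv x
  · rcases hra x y hxy with h2 | h0
    · rw [h2, sq]
      calc f x * f y * (f x * f y) = f x * (f y * f x) * f y := by group
        _ = f x * (f x * f y) * f y := by rw [hcomm x y h2]
        _ = (f x * f x) * (f y * f y) := by group
        _ = 1 := by rw [hinv, hinv, one_mul]
    · rw [h0, pow_zero]

theorem simple_ne_simple (hra : IsRA M) {i j : B} (hij : i ≠ j) :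
    cs.simple i ≠ cs.simple j := by
  classical
  set a : Equiv.Perm (Bool × Bool) := Function.Involutive.toPerm
    (fun p => (!p.1, p.2)) (fun p => by simp) with hadef
  set b : Equiv.Perm (Bool × Bool) := Function.Involutive.toPerm
    (fun p => (p.1, !p.2)) (fun p => by simp) with hbdef
  set f : B → Equiv.Perm (Bool × Bool) :=
    fun x => if x = i then a else if x = j then b else 1 with hfdef
  have hmem : ∀ x, f x = a ∨ f x = b ∨ f x = 1 := by
    intro x
    rw [hfdef]
    by_cases h1 : x = i
    · left; simp [h1]
    · by_cases h2 : x = j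
      · right; left; simp [h1, h2, Ne.symm hij]
      · right; right; simp [h1, h2]
  have haa : a * a = 1 := by
    apply Equiv.ext; intro p
    show (!(!p.1), p.2) = p
    simp
  have hbb : b * b = 1 := by
    apply Equiv.ext; intro p
    show (p.1, !(!p.2)) = p
    simp
  have hab : a * b = b * a := by
    apply Equiv.ext; intro p
    rfl
  have hinv : ∀ x, f x * f x = 1 := by
    intro x
    rcases hmem x with h | h | h <;> rw [h]
    · exact haa
    · exact hbb
    · exact one_mul 1
  have hcommall : ∀ u v : Equiv.Perm (Bool × Bool),
      (u = a ∨ u = b ∨ u = 1) → (v = a ∨ v = b ∨ v = 1) → u * v = v * u := by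
    intro u v hu hv
    rcases hu with h | h | h <;> rcases hv with h' | h' | h' <;> rw [h, h'] <;>
      first
        | rfl
        | rw [hab]
        | rw [one_mul, mul_one]
        | rw [mul_one, one_mul]
  have hf : M.IsLiftable f :=
    liftable_of_pairs hra f hinv (fun x y _ => hcommall _ _ (hmem x) (hmem y))
  intro heq
  have h2 := congrArg (cs.lift ⟨f, hf⟩) heq
  rw [cs.lift_apply_simple hf i, cs.lift_apply_simple hf j] at h2
  have hfi : f i = a := by rw [hfdef]; simp
  have hfj : f j = b := by rw [hfdef]; simp [hij.symm]
  rw [hfi, hfj] at h2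
  have h3 : a (true, true) = b (true, true) := by rw [h2]
  have ha' : a (true, true) = (false, true) := rfl
  have hb' : b (true, true) = (true, false) := rfl
  rw [ha', hb'] at h3
  simp at h3

section Model

theorem alt_reduced_of_M_eq_zero (hra : IsRA M) {i j : B} (hij : i ≠ j)
    (hz : M i j = 0) (k : ℕ) : cs.IsReduced (CoxeterSystem.alternatingWord i j k) := by
  classical
  -- the infinite dihedral model inside `Equiv.Perm ℤ`
  set a : Equiv.Perm ℤ := Equiv.neg ℤ with hadef
  set b : Equiv.Perm ℤ := Function.Involutive.toPerm (fun x => 1 - x)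
    (fun x => by ring) with hbdef
  have ha_apply : ∀ x : ℤ, a x = -x := fun x => rfl
  have hb_apply : ∀ x : ℤ, b x = 1 - x := fun x => rfl
  have ha2 : a * a = 1 := by
    apply Equiv.ext; intro x
    show a (a x) = x
    rw [ha_apply, ha_apply]; ring
  have hb2 : b * b = 1 := by
    apply Equiv.ext; intro x
    show b (b x) = x
    rw [hb_apply, hb_apply]; ring
  set f : B → Equiv.Perm ℤ := fun b' => if b' = i then a else if b' = j then b else 1
    with hfdef
  have hfi : f i = a := by rw [hfdef]; simp
  have hfj : f j = b := by rw [hfdef]; simp [hij.symm]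
  have hmem : ∀ x, f x = a ∨ f x = b ∨ f x = 1 := by
    intro x
    rw [hfdef]
    by_cases h1 : x = i
    · left; simp [h1]
    · by_cases h2 : x = j
      · right; left; simp [h1, h2, Ne.symm hij]
      · right; right; simp [h1, h2]
  have honly : ∀ x, f x ≠ 1 → x = i ∨ x = j := by
    intro x hx
    by_cases h1 : x = i
    · left; exact h1
    · by_cases h2 : x = j
      · right; exact h2
      · exfalso; apply hx; rw [hfdef]; simp [h1, h2]
  have hinv : ∀ x, f x * f x = 1 := by
    intro x
    rcases hmem x with h | h | h <;> rw [h]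
    · exact ha2
    · exact hb2
    · exact one_mul 1
  have hcomm : ∀ x y, M x y = 2 → f x * f y = f y * f x := by
    intro x y h2
    by_cases hx1 : f x = 1
    · rw [hx1, one_mul, mul_one]
    by_cases hy1 : f y = 1
    · rw [hy1, one_mul, mul_one]
    -- both x and y lie in {i, j}; since M i j = 0 ≠ 2 and M x x = 1 ≠ 2, contradiction
    exfalso
    have hxy : x ≠ y := by
      intro h
      rw [h, M.diagonal] at h2
      omega
    rcases honly x hx1 with hxi | hxj <;> rcases honly y hy1 with hyi | hyj
    · exact hxy (hxi.trans hyi.symm)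
    · rw [hxi, hyj, hz] at h2; omega
    · rw [hxj, hyi, M.symmetric j i, hz] at h2; omega
    · exact hxy (hxj.trans hyj.symm)
  have hf : M.IsLiftable f := liftable_of_pairs hra f hinv hcomm
  set θ : W →* Equiv.Perm ℤ := cs.lift ⟨f, hf⟩ with hθdef
  -- every image of a word is affine with bounded "norm"
  have bound : ∀ ω : List B, ∃ ε c : ℤ, (ε = 1 ∨ ε = -1) ∧
      (∀ x : ℤ, θ (cs.wordProd ω) x = ε * x + c) ∧
      (ε = 1 → (2*c).natAbs ≤ ω.length) ∧ (ε = -1 → (2*c - 1).natAbs ≤ ω.length) := by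
    intro ω
    induction ω with
    | nil =>
      refine ⟨1, 0, Or.inl rfl, ?_, ?_, ?_⟩
      · intro x
        rw [cs.wordProd_nil, map_one]
        show x = 1 * x + 0
        ring
      · intro _; simp
      · intro h; omega
    | cons u ω ih =>
      obtain ⟨ε, c, hε, happ, hb1, hb2'⟩ := ih
      have hcons : ∀ x : ℤ, θ (cs.wordProd (u :: ω)) x = (f u) (θ (cs.wordProd ω) x) := by
        intro x
        rw [cs.wordProd_cons, map_mul, Equiv.Perm.mul_apply]
        congr 1
        rw [hθdef, cs.lift_apply_simple hf u]
      rcases hmem u with hu | hu | hu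
      · refine ⟨-ε, -c, by omega, ?_, ?_, ?_⟩
        · intro x
          rw [hcons, hu, happ, ha_apply]
          ring
        · intro h
          have hεe : ε = -1 := by rcases hε with h' | h' <;> omega
          have := hb2' hεe
          simp only [List.length_cons]
          omega
        · intro h
          have hεe : ε = 1 := by rcases hε with h' | h' <;> omega
          have := hb1 hεe
          simp only [List.length_cons]
          omega
      · refine ⟨-ε, 1 - c, by omega, ?_, ?_, ?_⟩
        · intro x
          rw [hcons, hu, happ, hb_apply]
          ring
        · intro h
          have hεe : ε = -1 := by rcases hε with h' | h' <;> omega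
          have := hb2' hεe
          simp only [List.length_cons]
          omega
        · intro h
          have hεe : ε = 1 := by rcases hε with h' | h' <;> omega
          have := hb1 hεe
          simp only [List.length_cons]
          omega
      · refine ⟨ε, c, hε, ?_, ?_, ?_⟩
        · intro x
          rw [hcons, hu, happ]
          rfl
        · intro h
          have := hb1 h
          simp only [List.length_cons]
          omega
        · intro h
          have := hb2' h
          simp only [List.length_cons]
          omega
  -- the image of the alternating word
  have altval : ∀ m : ℕ, ∃ ε c : ℤ,
      (∀ x : ℤ, θ (cs.wordProd (CoxeterSystem.alternatingWord i j m)) x = ε * x + c) ∧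
      ((ε = 1 ∧ 2*c = -(m:ℤ)) ∨ (ε = -1 ∧ 2*c - 1 = (m:ℤ))) := by
    intro m
    induction m with
    | zero =>
      refine ⟨1, 0, ?_, Or.inl ⟨rfl, by simp⟩⟩
      intro x
      rw [show CoxeterSystem.alternatingWord i j 0 = ([] : List B) from rfl,
        cs.wordProd_nil, map_one]
      show x = 1 * x + 0
      ring
    | succ m ih =>
      obtain ⟨ε, c, happ, hinvr⟩ := ih
      have hsucc : CoxeterSystem.alternatingWord i j (m+1)
          = (if Even m then j else i) :: CoxeterSystem.alternatingWord i j m :=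
        CoxeterSystem.alternatingWord_succ' i j m
      have hcons : ∀ x : ℤ, θ (cs.wordProd (CoxeterSystem.alternatingWord i j (m+1))) x
          = (f (if Even m then j else i)) (θ (cs.wordProd
            (CoxeterSystem.alternatingWord i j m)) x) := by
        intro x
        rw [hsucc, cs.wordProd_cons, map_mul, Equiv.Perm.mul_apply]
        congr 1
        rw [hθdef, cs.lift_apply_simple hf]
      rcases hinvr with ⟨hε, hc⟩ | ⟨hε, hc⟩
      · -- ε = 1, 2c = -m, so m is even, next letter is j
        have hmeven : Even m := by
          rcases Nat.even_or_odd m with h | h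
          · exact h
          · exfalso
            obtain ⟨r, hr⟩ := h
            omega
        refine ⟨-1, 1 - c, ?_, Or.inr ⟨rfl, by push_cast; omega⟩⟩
        intro x
        rw [hcons, if_pos hmeven, hfj, happ, hb_apply, hε]
        ring
      · -- ε = -1, 2c - 1 = m, so m is odd, next letter is i
        have hmodd : ¬ Even m := by
          intro h
          obtain ⟨r, hr⟩ := h
          omega
        refine ⟨1, -c, ?_, Or.inl ⟨rfl, by push_cast; omega⟩⟩
        intro x
        rw [hcons, if_neg hmodd, hfi, happ, ha_apply, hε]
        ring
  -- conclude
  rw [isReduced_iff', CoxeterSystem.length_alternatingWord]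
  obtain ⟨ω, hred, hπ⟩ := cs.exists_reduced_word'
    (cs.wordProd (CoxeterSystem.alternatingWord i j k))
  have hωlen : ω.length = cs.length (cs.wordProd (CoxeterSystem.alternatingWord i j k)) := by
    rw [hπ]
    exact ((isReduced_iff' cs ω).mp hred).symm
  obtain ⟨ε, c, hε, happ, hb1, hb2'⟩ := bound ω
  obtain ⟨ε', c', happ', hinv'⟩ := altval k
  rw [hπ] at happ'
  have hc : c = c' := by
    have h0 := happ 0
    have h0' := happ' 0
    omega
  have hεε : ε = ε' := by
    have h1 := happ 1
    have h1' := happ' 1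
    omega
  have hge : k ≤ ω.length := by
    rcases hinv' with ⟨he, hcv⟩ | ⟨he, hcv⟩
    · have := hb1 (by omega)
      omega
    · have := hb2' (by omega)
      omega
  have hle := cs.length_wordProd_le (CoxeterSystem.alternatingWord i j k)
  rw [CoxeterSystem.length_alternatingWord] at hle
  omega

end Model

end ClosingSqAux


/-- Closing squares (first form): if `ℓ(w₁) = ℓ(w₂) = n`, `ℓ(w₃) = n + 1` and
`w₃ = w₁ t = w₂ s` with `s ≠ t`, then `s` and `t` commute, `w₁ s = w₂ t`, and
`ℓ(w₁ s) = n - 1`. -/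
theorem closing_squares_one {B W : Type*} [Group W] {M : CoxeterMatrix B}
    (cs : CoxeterSystem M W) (hra : M.IsRightAngled)
    (n : ℕ) (hn : 1 ≤ n) (w₁ w₂ w₃ : W) (s t : B) (hst : s ≠ t)
    (h1 : cs.length w₁ = n) (h2 : cs.length w₂ = n) (h3 : cs.length w₃ = n + 1)
    (e1 : w₃ = w₁ * cs.simple t) (e2 : w₃ = w₂ * cs.simple s) :
    cs.simple s * cs.simple t = cs.simple t * cs.simple s ∧
      w₁ * cs.simple s = w₂ * cs.simple t ∧
      cs.length (w₁ * cs.simple s) = n - 1 := by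
  have hra' : ClosingSqAux.IsRA M := hra
  have hw2 : w₃ * cs.simple s = w₂ := by
    rw [e2, mul_assoc, cs.simple_mul_simple_self, mul_one]
  have hw1 : w₃ * cs.simple t = w₁ := by
    rw [e1, mul_assoc, cs.simple_mul_simple_self, mul_one]
  have hd_s : cs.IsRightDescent w₃ s := by
    show cs.length (w₃ * cs.simple s) < cs.length w₃
    rw [hw2, h2, h3]; omega
  have hd_t : cs.IsRightDescent w₃ t := by
    show cs.length (w₃ * cs.simple t) < cs.length w₃
    rw [hw1, h1, h3]; omega
  have hne : cs.simple t ≠ cs.simple s :=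
    ClosingSqAux.simple_ne_simple cs hra' (Ne.symm hst)
  have hM2 : M s t = 2 := by
    rcases hra s t hst with h | h
    · exact h
    · exfalso
      exact ClosingSqAux.no_two_descents_of_alt_reduced cs (i := s) (j := t)
        (fun k => ⟨ClosingSqAux.alt_reduced_of_M_eq_zero cs hra' hst h k,
          ClosingSqAux.alt_reduced_of_M_eq_zero cs hra' (Ne.symm hst)
            (by rw [← M.symmetric]; exact h) k⟩)
        hd_s hd_t
  have comm : cs.simple s * cs.simple t = cs.simple t * cs.simple s := by
    have hp := cs.simple_mul_simple_pow s t
    rw [hM2, sq] at hp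
    have hx : cs.simple s * cs.simple t = (cs.simple s * cs.simple t)⁻¹ :=
      eq_inv_of_mul_eq_one_left hp
    rw [hx, mul_inv_rev, cs.inv_simple, cs.inv_simple]
  obtain ⟨ω', hred, hπ⟩ := ClosingSqAux.descent_pair cs hne hd_t hd_s
  have hw3 : w₃ = cs.wordProd ω' * cs.simple t * cs.simple s := by
    rw [← hπ, show (ω' ++ [t, s]) = ((ω' ++ [t]) ++ [s]) by simp, cs.wordProd_append,
      cs.wordProd_append, cs.wordProd_singleton, cs.wordProd_singleton]
  have hulen : cs.length (cs.wordProd ω') = n - 1 := by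
    have hω'red : cs.IsReduced ω' := by
      have := hred.take ω'.length
      rwa [List.take_left] at this
    have h0 : cs.length (cs.wordProd (ω' ++ [t, s])) = (ω' ++ [t, s]).length := hred
    rw [hπ, h3] at h0
    have h4 : (ω' ++ [t, s]).length = ω'.length + 2 := by simp
    have h5 : cs.length (cs.wordProd ω') = ω'.length := hω'red
    omega
  refine ⟨comm, ?_, ?_⟩
  · rw [← hw1, ← hw2, mul_assoc, mul_assoc, comm]
  · have hw1s : w₁ * cs.simple s = cs.wordProd ω' := by
      rw [← hw1, hw3]
      have hts : (cs.simple t * cs.simple s) * (cs.simple t * cs.simple s) = 1 := by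
        have h6 := cs.simple_mul_simple_pow' s t
        rw [hM2, sq] at h6
        exact h6
      calc cs.wordProd ω' * cs.simple t * cs.simple s * cs.simple t * cs.simple s
          = cs.wordProd ω' * ((cs.simple t * cs.simple s) * (cs.simple t * cs.simple s)) := by
            group
        _ = cs.wordProd ω' := by rw [hts, mul_one]
    rw [hw1s, hulen]
end
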